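/- arXiv:0905.4187 — 13 statements merged into one kernel-verified Lean document; each statement's English description precedes it below -/
import Mathlib

section
/- Let P_n be the Catalan-Larcombe-French numbers defined by P_0 = 1, P_1 = 8, and n^2 P_n = 8(3n^2 - 3n + 1) P_{n-1} - 128(n-1)^2 P_{n-2} for n ≥ 2. Then every P_n is a positive integer. -/
open Finset

/-- Summand: `C(n,k) * C(2k,k) * C(2(n-k),n-k)`, as a rational number. -/
def clfF (n k : ℕ) : ℚ :=
  (n.choose k : ℚ) * (Nat.centralBinom k : ℚ) * (Nat.centralBinom (n - k) : ℚ)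

/-- `aCLF n = ∑_{k=0}^n C(n,k) C(2k,k) C(2(n-k),n-k)`. -/
def aCLF (n : ℕ) : ℚ := ∑ k ∈ Finset.range (n + 1), clfF n k

/-- The Gosper certificate for the telescoping proof of the recurrence. -/
def gCLF (n k : ℕ) : ℚ :=
  clfF n k * (k : ℚ) ^ 2 * (2 * (k : ℚ) * ((n : ℚ) - 1) - (n : ℚ) * (2 * (n : ℚ) - 3)) /
    ((n : ℚ) * (2 * (n : ℚ) - 2 * (k : ℚ) - 1))

set_option maxHeartbeats 2000000 in
lemma clf_key₁ (j k : ℕ) :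
    ((j + k + 2 : ℕ) : ℚ) ^ 2 * clfF (j + k + 2) k
      - 4 * (3 * ((j + k + 2 : ℕ) : ℚ) ^ 2 - 3 * ((j + k + 2 : ℕ) : ℚ) + 1) * clfF (j + k + 1) k
      + 32 * (((j + k + 2 : ℕ) : ℚ) - 1) ^ 2 * clfF (j + k) k
      = gCLF (j + k + 2) (k + 1) - gCLF (j + k + 2) k := by
  have hj1 : ((j : ℚ) + 1) ≠ 0 := by positivity
  have hj2 : ((j : ℚ) + 2) ≠ 0 := by positivity
  have hk1 : ((k : ℚ) + 1) ≠ 0 := by positivity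
  have hN : ((j : ℚ) + (k : ℚ) + 2) ≠ 0 := by positivity
  have hd1 : (2 * (j : ℚ) + 1) ≠ 0 := by positivity
  have hd2 : (2 * (j : ℚ) + 3) ≠ 0 := by positivity
  -- ratio relations
  have hx1' := Nat.choose_mul_succ_eq (j + k) k
  rw [show j + k + 1 - k = j + 1 by omega] at hx1'
  have hx1 : ((j + k + 1).choose k : ℚ) * ((j : ℚ) + 1)
      = ((j + k).choose k : ℚ) * ((j : ℚ) + (k : ℚ) + 1) := by exact_mod_cast hx1'.symm
  have hx2' := Nat.choose_mul_succ_eq (j + k + 1) k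
  rw [show j + k + 1 + 1 - k = j + 2 by omega, show j + k + 1 + 1 = j + k + 2 by omega] at hx2'
  have hx2 : ((j + k + 2).choose k : ℚ) * ((j : ℚ) + 2)
      = ((j + k + 1).choose k : ℚ) * ((j : ℚ) + (k : ℚ) + 2) := by exact_mod_cast hx2'.symm
  have hx3' := Nat.choose_succ_right_eq (j + k + 2) k
  rw [show j + k + 2 - k = j + 2 by omega] at hx3'
  have hx3 : ((j + k + 2).choose (k + 1) : ℚ) * ((k : ℚ) + 1)
      = ((j + k + 2).choose k : ℚ) * ((j : ℚ) + 2) := by exact_mod_cast hx3'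
  have hu' := Nat.succ_mul_centralBinom_succ k
  have hu : ((k + 1).centralBinom : ℚ) * ((k : ℚ) + 1)
      = 2 * (2 * (k : ℚ) + 1) * (k.centralBinom : ℚ) := by
    rw [mul_comm] at hu'; exact_mod_cast hu'
  have hv1' := Nat.succ_mul_centralBinom_succ j
  have hv1 : ((j + 1).centralBinom : ℚ) * ((j : ℚ) + 1)
      = 2 * (2 * (j : ℚ) + 1) * (j.centralBinom : ℚ) := by
    rw [mul_comm] at hv1'; exact_mod_cast hv1'
  have hv2' := Nat.succ_mul_centralBinom_succ (j + 1)
  have hv2 : ((j + 2).centralBinom : ℚ) * ((j : ℚ) + 2)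
      = 2 * (2 * (j : ℚ) + 3) * ((j + 1).centralBinom : ℚ) := by
    rw [mul_comm] at hv2'; exact_mod_cast hv2'
  -- division forms
  have e1 : ((j + k + 1).choose k : ℚ)
      = ((j + k).choose k : ℚ) * ((j : ℚ) + (k : ℚ) + 1) / ((j : ℚ) + 1) :=
    (eq_div_iff hj1).2 hx1
  have e2 : ((j + k + 2).choose k : ℚ)
      = ((j + k + 1).choose k : ℚ) * ((j : ℚ) + (k : ℚ) + 2) / ((j : ℚ) + 2) :=
    (eq_div_iff hj2).2 hx2
  have e3 : ((j + k + 2).choose (k + 1) : ℚ)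
      = ((j + k + 2).choose k : ℚ) * ((j : ℚ) + 2) / ((k : ℚ) + 1) :=
    (eq_div_iff hk1).2 hx3
  have eu : ((k + 1).centralBinom : ℚ)
      = 2 * (2 * (k : ℚ) + 1) * (k.centralBinom : ℚ) / ((k : ℚ) + 1) :=
    (eq_div_iff hk1).2 hu
  have ev1 : ((j + 1).centralBinom : ℚ)
      = 2 * (2 * (j : ℚ) + 1) * (j.centralBinom : ℚ) / ((j : ℚ) + 1) :=
    (eq_div_iff hj1).2 hv1
  have ev2 : ((j + 2).centralBinom : ℚ)
      = 2 * (2 * (j : ℚ) + 3) * ((j + 1).centralBinom : ℚ) / ((j : ℚ) + 2) :=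
    (eq_div_iff hj2).2 hv2
  have hD1 : ((j + k + 2 : ℕ) : ℚ) * (2 * ((j + k + 2 : ℕ) : ℚ) - 2 * ((k + 1 : ℕ) : ℚ) - 1) ≠ 0 := by
    rw [show (2 * ((j + k + 2 : ℕ) : ℚ) - 2 * ((k + 1 : ℕ) : ℚ) - 1) = 2 * (j : ℚ) + 1 by
      push_cast; ring, show ((j + k + 2 : ℕ) : ℚ) = (j : ℚ) + (k : ℚ) + 2 by push_cast; ring]
    positivity
  have hD2 : ((j + k + 2 : ℕ) : ℚ) * (2 * ((j + k + 2 : ℕ) : ℚ) - 2 * ((k : ℕ) : ℚ) - 1) ≠ 0 := by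
    rw [show (2 * ((j + k + 2 : ℕ) : ℚ) - 2 * ((k : ℕ) : ℚ) - 1) = 2 * (j : ℚ) + 3 by
      push_cast; ring, show ((j + k + 2 : ℕ) : ℚ) = (j : ℚ) + (k : ℚ) + 2 by push_cast; ring]
    positivity
  unfold gCLF clfF
  rw [show j + k + 2 - (k + 1) = j + 1 by omega, show j + k + 2 - k = j + 2 by omega,
    show j + k + 1 - k = j + 1 by omega, show j + k - k = j by omega]
  rw [div_sub_div _ _ hD1 hD2, eq_div_iff (mul_ne_zero hD1 hD2)]
  rw [e3, e2, e1, ev2, ev1, eu]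
  push_cast
  field_simp
  ring

lemma clf_key₂ (m : ℕ) :
    ((m + 2 : ℕ) : ℚ) ^ 2 * clfF (m + 2) (m + 1)
      - 4 * (3 * ((m + 2 : ℕ) : ℚ) ^ 2 - 3 * ((m + 2 : ℕ) : ℚ) + 1) * clfF (m + 1) (m + 1)
      + 32 * (((m + 2 : ℕ) : ℚ) - 1) ^ 2 * clfF m (m + 1)
      = gCLF (m + 2) (m + 2) - gCLF (m + 2) (m + 1) := by
  have hm2 : ((m : ℚ) + 2) ≠ 0 := by positivity
  have hv2' := Nat.succ_mul_centralBinom_succ (m + 1)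
  have hv2 : ((m + 2).centralBinom : ℚ) * ((m : ℚ) + 2)
      = 2 * (2 * (m : ℚ) + 3) * ((m + 1).centralBinom : ℚ) := by
    rw [mul_comm] at hv2'; exact_mod_cast hv2'
  have ev2 : ((m + 2).centralBinom : ℚ)
      = 2 * (2 * (m : ℚ) + 3) * ((m + 1).centralBinom : ℚ) / ((m : ℚ) + 2) :=
    (eq_div_iff hm2).2 hv2
  have hD1 : ((m + 2 : ℕ) : ℚ) * (2 * ((m + 2 : ℕ) : ℚ) - 2 * ((m + 2 : ℕ) : ℚ) - 1) ≠ 0 := by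
    rw [show ((m + 2 : ℕ) : ℚ) * (2 * ((m + 2 : ℕ) : ℚ) - 2 * ((m + 2 : ℕ) : ℚ) - 1)
        = -((m : ℚ) + 2) by push_cast; ring]
    exact neg_ne_zero.2 hm2
  have hD2 : ((m + 2 : ℕ) : ℚ) * (2 * ((m + 2 : ℕ) : ℚ) - 2 * ((m + 1 : ℕ) : ℚ) - 1) ≠ 0 := by
    rw [show ((m + 2 : ℕ) : ℚ) * (2 * ((m + 2 : ℕ) : ℚ) - 2 * ((m + 1 : ℕ) : ℚ) - 1)
        = ((m : ℚ) + 2) by push_cast; ring]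
    exact hm2
  unfold gCLF clfF
  rw [show m + 2 - (m + 2) = 0 by omega, show m + 2 - (m + 1) = 1 by omega,
    show m + 1 - (m + 1) = 0 by omega, show m - (m + 1) = 0 by omega,
    Nat.choose_self, Nat.choose_succ_self_right, Nat.choose_succ_self]
  rw [div_sub_div _ _ hD1 hD2, eq_div_iff (mul_ne_zero hD1 hD2)]
  rw [ev2]
  simp only [show Nat.centralBinom 1 = 2 by decide, show Nat.centralBinom 0 = 1 by decide,
    Nat.choose_self]
  push_cast
  field_simp
  ring

lemma clf_key₃ (m : ℕ) :
    ((m + 2 : ℕ) : ℚ) ^ 2 * clfF (m + 2) (m + 2)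
      - 4 * (3 * ((m + 2 : ℕ) : ℚ) ^ 2 - 3 * ((m + 2 : ℕ) : ℚ) + 1) * clfF (m + 1) (m + 2)
      + 32 * (((m + 2 : ℕ) : ℚ) - 1) ^ 2 * clfF m (m + 2)
      = gCLF (m + 2) (m + 3) - gCLF (m + 2) (m + 2) := by
  have hm2 : ((m : ℚ) + 2) ≠ 0 := by positivity
  have hD1 : ((m + 2 : ℕ) : ℚ) * (2 * ((m + 2 : ℕ) : ℚ) - 2 * ((m + 2 : ℕ) : ℚ) - 1) ≠ 0 := by
    rw [show ((m + 2 : ℕ) : ℚ) * (2 * ((m + 2 : ℕ) : ℚ) - 2 * ((m + 2 : ℕ) : ℚ) - 1)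
        = -((m : ℚ) + 2) by push_cast; ring]
    exact neg_ne_zero.2 hm2
  unfold gCLF clfF
  rw [show m + 2 - (m + 2) = 0 by omega, show m + 1 - (m + 2) = 0 by omega,
    show m - (m + 2) = 0 by omega,
    Nat.choose_self, show (m + 2).choose (m + 3) = 0 from Nat.choose_succ_self (m + 2),
    show (m + 1).choose (m + 2) = 0 from Nat.choose_succ_self (m + 1),
    show m.choose (m + 2) = 0 from Nat.choose_eq_zero_of_lt (by omega)]
  simp only [show Nat.centralBinom 0 = 1 by decide, Nat.cast_zero, Nat.cast_one, zero_mul,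
    mul_zero, one_mul, mul_one, zero_div, zero_sub]
  rw [eq_comm, neg_eq_iff_eq_neg, div_eq_iff hD1]
  push_cast
  ring

lemma clf_key (m k : ℕ) (hk : k ≤ m + 2) :
    ((m + 2 : ℕ) : ℚ) ^ 2 * clfF (m + 2) k
      - 4 * (3 * ((m + 2 : ℕ) : ℚ) ^ 2 - 3 * ((m + 2 : ℕ) : ℚ) + 1) * clfF (m + 1) k
      + 32 * (((m + 2 : ℕ) : ℚ) - 1) ^ 2 * clfF m k
      = gCLF (m + 2) (k + 1) - gCLF (m + 2) k := by
  rcases lt_trichotomy k (m + 1) with h | h | h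
  · obtain ⟨j, rfl⟩ : ∃ j, m = j + k := ⟨m - k, by omega⟩
    have h₁ := clf_key₁ j k
    convert h₁ using 3
  · subst h
    exact clf_key₂ m
  · have hk2 : k = m + 2 := by omega
    subst hk2
    exact clf_key₃ m

lemma clf_arec (m : ℕ) :
    ((m + 2 : ℕ) : ℚ) ^ 2 * aCLF (m + 2)
      = 4 * (3 * ((m + 2 : ℕ) : ℚ) ^ 2 - 3 * ((m + 2 : ℕ) : ℚ) + 1) * aCLF (m + 1)
        - 32 * (((m + 2 : ℕ) : ℚ) - 1) ^ 2 * aCLF m := by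
  have h1 : ∑ k ∈ Finset.range (m + 2 + 1), clfF (m + 1) k = aCLF (m + 1) := by
    rw [Finset.sum_range_succ, aCLF]
    simp [clfF, Nat.choose_succ_self]
  have h2 : ∑ k ∈ Finset.range (m + 2 + 1), clfF m k = aCLF m := by
    rw [Finset.sum_range_succ, Finset.sum_range_succ, aCLF]
    simp [clfF, Nat.choose_succ_self, Nat.choose_eq_zero_of_lt (show m < m + 2 by omega)]
  have g0 : gCLF (m + 2) 0 = 0 := by simp [gCLF]
  have gtop : gCLF (m + 2) (m + 2 + 1) = 0 := by
    simp [gCLF, clfF, Nat.choose_succ_self]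
  have hsum : ∑ k ∈ Finset.range (m + 2 + 1),
      (((m + 2 : ℕ) : ℚ) ^ 2 * clfF (m + 2) k
        - 4 * (3 * ((m + 2 : ℕ) : ℚ) ^ 2 - 3 * ((m + 2 : ℕ) : ℚ) + 1) * clfF (m + 1) k
        + 32 * (((m + 2 : ℕ) : ℚ) - 1) ^ 2 * clfF m k) = 0 := by
    rw [Finset.sum_congr rfl (fun k hk => clf_key m k (by
      have := Finset.mem_range.1 hk; omega))]
    rw [Finset.sum_range_sub (fun k => gCLF (m + 2) k), g0, gtop, sub_zero]
  have expand : ((m + 2 : ℕ) : ℚ) ^ 2 * aCLF (m + 2)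
      - 4 * (3 * ((m + 2 : ℕ) : ℚ) ^ 2 - 3 * ((m + 2 : ℕ) : ℚ) + 1) * aCLF (m + 1)
      + 32 * (((m + 2 : ℕ) : ℚ) - 1) ^ 2 * aCLF m = 0 := by
    rw [← h1, ← h2, aCLF, Finset.mul_sum, Finset.mul_sum, Finset.mul_sum,
      ← Finset.sum_sub_distrib, ← Finset.sum_add_distrib]
    exact hsum
  linarith [expand]

/-- The integer (in fact natural) version of the sequence. -/
def sCLF (n : ℕ) : ℕ :=
  ∑ k ∈ Finset.range (n + 1), n.choose k * Nat.centralBinom k * Nat.centralBinom (n - k)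

lemma aCLF_cast (n : ℕ) : aCLF n = (sCLF n : ℚ) := by
  rw [aCLF, sCLF]
  push_cast
  rfl

lemma sCLF_pos (n : ℕ) : 0 < sCLF n := by
  apply Finset.sum_pos
  · intro k hk
    have hkn : k ≤ n := by have := Finset.mem_range.1 hk; omega
    exact Nat.mul_pos (Nat.mul_pos (Nat.choose_pos hkn) (Nat.centralBinom_pos k))
      (Nat.centralBinom_pos (n - k))
  · exact ⟨0, Finset.mem_range.2 (by omega)⟩

/-- The Catalan-Larcombe-French numbers, defined a priori as a rational
sequence by `P 0 = 1`, `P 1 = 8` and the recurrence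
`n^2 P n = 8(3n^2-3n+1) P (n-1) - 128(n-1)^2 P (n-2)`, are positive integers. -/
theorem clf_pos_integer (P : ℕ → ℚ) (h0 : P 0 = 1) (h1 : P 1 = 8)
    (hrec : ∀ n : ℕ, 2 ≤ n →
      (n : ℚ) ^ 2 * P n =
        8 * (3 * (n : ℚ) ^ 2 - 3 * (n : ℚ) + 1) * P (n - 1)
          - 128 * ((n : ℚ) - 1) ^ 2 * P (n - 2)) :
    ∀ n : ℕ, ∃ k : ℤ, 0 < k ∧ P n = (k : ℚ) := by
  have hP : ∀ n, P n = 2 ^ n * aCLF n := by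
    intro n
    induction n using Nat.strong_induction_on with
    | _ n ih =>
      match n with
      | 0 =>
        rw [h0]
        norm_num [aCLF, clfF]
      | 1 =>
        rw [h1]
        norm_num [aCLF, clfF, Finset.sum_range_succ, Nat.centralBinom]
      | (m + 2) =>
        have hr := hrec (m + 2) (by omega)
        rw [show m + 2 - 1 = m + 1 by omega, show m + 2 - 2 = m by omega] at hr
        rw [ih (m + 1) (by omega), ih m (by omega)] at hr
        have ha := clf_arec m
        have hN : ((m + 2 : ℕ) : ℚ) ≠ 0 := by push_cast; positivity
        refine mul_left_cancel₀ (pow_ne_zero 2 hN) ?_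
        rw [hr]
        linear_combination (-(2 : ℚ) ^ (m + 2)) * ha
  intro n
  refine ⟨2 ^ n * (sCLF n : ℤ), ?_, ?_⟩
  · have : (0 : ℤ) < (sCLF n : ℤ) := by exact_mod_cast sCLF_pos n
    positivity
  · rw [hP n, aCLF_cast]
    push_cast
    ring
end

section
/- For an odd prime p, P_{p-1} ≡ (-1)^{(p-1)/2} (mod p), where P_n are the Catalan-Larcombe-French numbers. -/
open Finset

section CLFAux
variable (p m : ℕ)

/-- WZ certificate identity for the CLF closed form. -/
lemma keyId (n k : ℕ) (hn : 2 ≤ n) (hk : 1 ≤ k) :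
    (2*(k:ℤ)-1)^2 * ((n:ℤ)^2 * (n.choose (2*k) : ℤ)
        - (3*(n:ℤ)^2-3*(n:ℤ)+1) * ((n-1).choose (2*k) : ℤ)
        + (2*((n:ℤ)-1)^2+(2*(k:ℤ)+1)*((n:ℤ)-1)) * ((n-2).choose (2*k) : ℤ))
      = 4*(k:ℤ)^2*(2*(k:ℤ)-1)*((n:ℤ)-1) * ((n-2).choose (2*k-2) : ℤ) := by
  obtain ⟨a, rfl⟩ : ∃ a, n = a + 2 := ⟨n - 2, by omega⟩
  obtain ⟨b, rfl⟩ : ∃ b, k = b + 1 := ⟨k - 1, by omega⟩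
  have e1 : a + 2 - 1 = a + 1 := by omega
  have e2 : a + 2 - 2 = a := by omega
  have e3 : 2*(b+1) - 2 = 2*b := by omega
  have e4 : 2*(b+1) = 2*b+2 := by omega
  rw [e1, e2, e3, e4]
  have pas1 : (a+1).choose (2*b+2) = a.choose (2*b+1) + a.choose (2*b+2) :=
    Nat.choose_succ_succ a (2*b+1)
  have pas2 : (a+2).choose (2*b+2) = (a+1).choose (2*b+1) + (a+1).choose (2*b+2) :=
    Nat.choose_succ_succ (a+1) (2*b+1)
  have pas3 : (a+1).choose (2*b+1) = a.choose (2*b) + a.choose (2*b+1) :=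
    Nat.choose_succ_succ a (2*b)
  rcases lt_trichotomy a (2*b+1) with h | h | h
  · -- a ≤ 2b : cases a < 2b or a = 2b
    rcases Nat.lt_or_ge a (2*b) with h2 | h2
    · have z1 : a.choose (2*b) = 0 := Nat.choose_eq_zero_of_lt h2
      have z2 : a.choose (2*b+1) = 0 := Nat.choose_eq_zero_of_lt (by omega)
      have z3 : a.choose (2*b+2) = 0 := Nat.choose_eq_zero_of_lt (by omega)
      rw [pas2, pas3, pas1, z1, z2, z3]
      push_cast; ring
    · have h2' : a = 2*b := by omega
      subst h2'
      have z2 : (2*b).choose (2*b+1) = 0 := Nat.choose_eq_zero_of_lt (by omega)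
      have z3 : (2*b).choose (2*b+2) = 0 := Nat.choose_eq_zero_of_lt (by omega)
      rw [pas2, pas3, pas1, z2, z3, Nat.choose_self]
      push_cast; ring
  · -- a = 2b+1
    subst h
    have z3 : (2*b+1).choose (2*b+2) = 0 := Nat.choose_eq_zero_of_lt (by omega)
    have y1 : (2*b+1).choose (2*b+1) = 1 := Nat.choose_self _
    have z1 : (2*b+1).choose (2*b) = 2*b+1 := by
      rw [← Nat.choose_symm (by omega)]
      simp
    rw [pas2, pas3, pas1, z3, y1, z1]
    push_cast; ring
  · -- main case: 2b+2 ≤ a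
    obtain ⟨s, rfl⟩ : ∃ s, a = 2*b+2+s := ⟨a - (2*b+2), by omega⟩
    have h1 : ((2*b+2+s).choose (2*b+1) : ℤ) * (2*b+1) =
        ((2*b+2+s).choose (2*b) : ℤ) * (s+2) := by
      have := Nat.choose_succ_right_eq (2*b+2+s) (2*b)
      have e : 2*b+2+s - (2*b) = s + 2 := by omega
      rw [e] at this
      exact_mod_cast this
    have h2 : ((2*b+2+s).choose (2*b+2) : ℤ) * (2*b+2) =
        ((2*b+2+s).choose (2*b+1) : ℤ) * (s+1) := by
      have := Nat.choose_succ_right_eq (2*b+2+s) (2*b+1)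
      have e : 2*b+2+s - (2*b+1) = s + 1 := by omega
      rw [e] at this
      exact_mod_cast this
    rw [pas2, pas3, pas1]
    refine mul_left_cancel₀ (show ((2*(b:ℤ)+1)*(2*(b:ℤ)+2)) ≠ 0 by positivity) ?_
    push_cast
    linear_combination (2*((b:ℤ)+1)*(2*(b:ℤ)+1)^3*((2*(b:ℤ)+3)+(s:ℤ))) * h2 +
      (2*((b:ℤ)+1)*(2*(b:ℤ)+1)^2*((3*(2*(b:ℤ)+4+(s:ℤ))-1-(2*(b:ℤ)+4+(s:ℤ))^2) +
        (2*(b:ℤ)+3+(s:ℤ))*((s:ℤ)+1))) * h1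

lemma choosePm (hp : p.Prime) : ∀ j, j ≤ p - 1 → (((p-1).choose j : ℕ) : ZMod p) = (-1)^j := by
  intro j
  induction j with
  | zero => simp
  | succ j ihj =>
    intro hj
    have hp2 : 2 ≤ p := hp.two_le
    have key : ((p.choose (j+1) : ℕ) : ZMod p) = 0 := by
      rw [ZMod.natCast_eq_zero_iff]
      exact hp.dvd_choose_self (Nat.succ_ne_zero j) (by omega)
    have pas : p.choose (j+1) = (p-1).choose j + (p-1).choose (j+1) := by
      conv_lhs => rw [show p = (p-1)+1 by omega]
      exact Nat.choose_succ_succ _ _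
    have : (((p-1).choose j : ℕ) : ZMod p) + ((p-1).choose (j+1) : ℕ) = 0 := by
      rw [← Nat.cast_add, ← pas, key]
    rw [ihj (by omega)] at this
    have h := eq_neg_of_add_eq_zero_right this
    rw [h, pow_succ]
    ring

lemma urel (hpm : p = 2*m+1) (k : ℕ) (hk : 1 ≤ k) :
    4*(k : ZMod p)^2 * (m.choose k : ZMod p)^2
      = (2*(k:ZMod p)-1)^2 * (m.choose (k-1) : ZMod p)^2 := by
  obtain ⟨j, rfl⟩ : ∃ j, k = j + 1 := ⟨k-1, by omega⟩
  rw [Nat.add_sub_cancel]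
  rcases le_or_gt j m with hj | hj
  · have h := Nat.choose_succ_right_eq m j
    have h2 : ((m.choose (j+1) : ℕ) : ZMod p) * ((j:ZMod p)+1)
        = (m.choose j : ℕ) * ((m:ZMod p) - j) := by
      have hc := congrArg (Nat.cast : ℕ → ZMod p) h
      push_cast [Nat.cast_sub hj] at hc
      push_cast
      linear_combination hc
    have hm : 2*(m : ZMod p) = -1 := by
      have h0 : ((2*m+1 : ℕ) : ZMod p) = 0 := by rw [← hpm]; exact ZMod.natCast_self p
      push_cast at h0
      linear_combination h0
    push_cast
    linear_combination (4*((j:ZMod p)+1)*(m.choose (j+1) : ℕ) + 4*((m:ZMod p)-(j:ZMod p))*(m.choose j : ℕ)) * h2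
      + (((m.choose j : ℕ):ZMod p)^2*(2*(m:ZMod p)-4*(j:ZMod p)-1)) * hm
  · have h1 : m.choose (j+1) = 0 := Nat.choose_eq_zero_of_lt (by omega)
    have h2 : m.choose j = 0 := Nat.choose_eq_zero_of_lt hj
    simp [h1, h2]


end CLFAux

lemma Dterm (p m : ℕ) [Fact p.Prime] (hpm : p = 2*m+1) (n k : ℕ) (hn : 2 ≤ n) (hk : 1 ≤ k) :
    ((n : ZMod p)^2 * (n.choose (2*k) : ZMod p)
        - (3*(n:ZMod p)^2-3*(n:ZMod p)+1) * ((n-1).choose (2*k) : ZMod p)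
        + (2*((n:ZMod p)-1)^2+(2*(k:ZMod p)+1)*((n:ZMod p)-1)) * ((n-2).choose (2*k) : ZMod p))
        * (m.choose k : ZMod p)^2
      = (2*(k:ZMod p)-1)*((n:ZMod p)-1) * ((n-2).choose (2*k-2) : ZMod p)
        * (m.choose (k-1) : ZMod p)^2 := by
  by_cases hz : (2*(k:ZMod p)-1) = 0
  · have hmk : m < k := by
      have h1 : ((2*k-1 : ℕ) : ZMod p) = 0 := by
        push_cast [Nat.cast_sub (by omega : 1 ≤ 2*k)]
        exact hz
      rw [ZMod.natCast_eq_zero_iff] at h1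
      have h2 : p ≤ 2*k-1 := Nat.le_of_dvd (by omega) h1
      omega
    have hu : (m.choose k : ZMod p) = 0 := by
      rw [Nat.choose_eq_zero_of_lt hmk]; simp
    rw [hu, hz]; ring
  · have hK := keyId n k hn hk
    have hK' := congrArg (fun x : ℤ => (x : ZMod p)) hK
    push_cast at hK'
    have hu := urel p m hpm k hk
    have h2 : (2*(k:ZMod p)-1)^2 ≠ 0 := pow_ne_zero _ hz
    apply mul_left_cancel₀ h2
    linear_combination ((m.choose k : ZMod p)^2) * hK'
      + (((n:ZMod p)-1)*((n-2).choose (2*k-2) : ZMod p)*(2*(k:ZMod p)-1)) * hu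

lemma Srec (p m : ℕ) [Fact p.Prime] (hpm : p = 2*m+1) (n : ℕ) (hn : 2 ≤ n) :
    (n : ZMod p)^2 * (∑ k ∈ range (n+1), (n.choose (2*k) : ZMod p) * (m.choose k : ZMod p)^2)
      = (3*(n:ZMod p)^2-3*(n:ZMod p)+1)
          * (∑ k ∈ range (n+1), ((n-1).choose (2*k) : ZMod p) * (m.choose k : ZMod p)^2)
        - 2*((n:ZMod p)-1)^2
          * (∑ k ∈ range (n+1), ((n-2).choose (2*k) : ZMod p) * (m.choose k : ZMod p)^2) := by
  set K := ZMod p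
  set g : ℕ → K := fun k =>
    (2*(k:K)+1)*((n:K)-1)*((n-2).choose (2*k) : K)*(m.choose k : K)^2 with hg
  set F : ℕ → K := fun k =>
    (n : K)^2 * (n.choose (2*k) : K) * (m.choose k : K)^2
      - (3*(n:K)^2-3*(n:K)+1) * ((n-1).choose (2*k) : K) * (m.choose k : K)^2
      + 2*((n:K)-1)^2 * ((n-2).choose (2*k) : K) * (m.choose k : K)^2 with hF
  have tel : ∀ k : ℕ, F (k+1) = g k - g (k+1) := by
    intro k
    have hD := Dterm p m hpm n (k+1) hn (by omega)
    have e1 : 2*(k+1) - 2 = 2*k := by omega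
    have e2 : (k+1) - 1 = k := by omega
    rw [e1, e2] at hD
    simp only [hF, hg]
    push_cast at hD ⊢
    linear_combination hD
  have hsum : ∑ k ∈ range (n+1), F k = 0 := by
    rw [Finset.sum_range_succ']
    have : ∀ k ∈ range n, F (k+1) = g k - g (k+1) := fun k _ => tel k
    rw [Finset.sum_congr rfl this, Finset.sum_range_sub']
    have hgn : g n = 0 := by
      simp only [hg]
      rw [Nat.choose_eq_zero_of_lt (by omega : n - 2 < 2*n)]
      push_cast; ring
    have hF0 : F 0 = -(g 0) := by
      simp only [hF, hg]
      norm_num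
      ring
    rw [hgn, hF0]
    ring
  have expand : ∑ k ∈ range (n+1), F k
      = (n : K)^2 * (∑ k ∈ range (n+1), (n.choose (2*k) : K) * (m.choose k : K)^2)
        - (3*(n:K)^2-3*(n:K)+1)
            * (∑ k ∈ range (n+1), ((n-1).choose (2*k) : K) * (m.choose k : K)^2)
        + 2*((n:K)-1)^2
            * (∑ k ∈ range (n+1), ((n-2).choose (2*k) : K) * (m.choose k : K)^2) := by
    rw [Finset.mul_sum, Finset.mul_sum, Finset.mul_sum, ← Finset.sum_sub_distrib,
      ← Finset.sum_add_distrib]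
    exact Finset.sum_congr rfl (fun k _ => by simp only [hF]; ring)
  rw [expand] at hsum
  linear_combination hsum


/-- For an odd prime `p`, `P (p-1) ≡ (-1)^((p-1)/2) (mod p)` for the
Catalan-Larcombe-French numbers. -/
theorem clf_p_sub_one (p : ℕ) (hp : p.Prime) (hodd : Odd p)
    (P : ℕ → ℤ) (h0 : P 0 = 1) (h1 : P 1 = 8)
    (hrec : ∀ n : ℕ, 2 ≤ n →
      (n : ℤ) ^ 2 * P n =
        8 * (3 * (n : ℤ) ^ 2 - 3 * (n : ℤ) + 1) * P (n - 1)
          - 128 * ((n : ℤ) - 1) ^ 2 * P (n - 2)) :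
    P (p - 1) ≡ (-1) ^ ((p - 1) / 2) [ZMOD p] := by
  haveI : Fact p.Prime := ⟨hp⟩
  obtain ⟨m, hpm⟩ := hodd
  have hp2 : 2 ≤ p := hp.two_le
  set K := ZMod p
  have h8 : (8 : K) ≠ 0 := by
    have : ((8:ℕ) : K) ≠ 0 := by
      rw [Ne, ZMod.natCast_eq_zero_iff]
      intro hdvd
      have : p ∣ 2^3 := by norm_num at hdvd ⊢; exact hdvd
      have hp2' : p ∣ 2 := hp.dvd_of_dvd_pow this
      have := (Nat.prime_dvd_prime_iff_eq hp Nat.prime_two).1 hp2'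
      omega
    simpa using this
  have main : ∀ n, n < p → (P n : K)
      = 8^n * ∑ k ∈ range (n+1), (n.choose (2*k) : K) * (m.choose k : K)^2 := by
    intro n
    induction n using Nat.strong_induction_on with
    | _ n ih =>
      intro hnp
      match n, ih, hnp with
      | 0, _, _ => simp [h0]
      | 1, _, _ =>
        rw [h1]
        norm_num [Finset.sum_range_succ]
      | (n'+2), ih, hnp =>
        have hrecK := congrArg (Int.cast : ℤ → ZMod p) (hrec (n'+2) (by omega))
        push_cast at hrecK
        have e1 : n' + 2 - 1 = n' + 1 := by omega
        have e2 : n' + 2 - 2 = n' := by omega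
        have ih1 := ih (n'+1) (by omega) (by omega)
        have ih2 := ih n' (by omega) (by omega)
        have pad1 : ∑ k ∈ range (n'+2+1), ((n'+1).choose (2*k) : K) * (m.choose k : K)^2
            = ∑ k ∈ range (n'+1+1), ((n'+1).choose (2*k) : K) * (m.choose k : K)^2 := by
          refine (Finset.sum_subset (by intro x hx; simp at hx ⊢; omega) ?_).symm
          intro k hk hk'
          simp only [Finset.mem_range] at hk hk'
          rw [Nat.choose_eq_zero_of_lt (show n'+1 < 2*k by omega)]
          push_cast; ring
        have pad2 : ∑ k ∈ range (n'+2+1), (n'.choose (2*k) : K) * (m.choose k : K)^2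
            = ∑ k ∈ range (n'+1), (n'.choose (2*k) : K) * (m.choose k : K)^2 := by
          refine (Finset.sum_subset (by intro x hx; simp at hx ⊢; omega) ?_).symm
          intro k hk hk'
          simp only [Finset.mem_range] at hk hk'
          rw [Nat.choose_eq_zero_of_lt (show n' < 2*k by omega)]
          push_cast; ring
        have hS := Srec p m hpm (n'+2) (by omega)
        rw [e1, e2, pad1, pad2] at hS
        have hne : ((n'+2 : ℕ) : K) ≠ 0 := by
          rw [Ne, ZMod.natCast_eq_zero_iff]
          intro hdvd
          have := Nat.le_of_dvd (by omega) hdvd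
          omega
        rw [ih1, ih2] at hrecK
        push_cast at hS hne ⊢
        have hkey : ((n':K)+2)^2 * ((P (n'+2) : K)
            - 8^(n'+2) * ∑ k ∈ range (n'+2+1), ((n'+2).choose (2*k) : K) * (m.choose k : K)^2)
            = 0 := by
          linear_combination hrecK - (8:K)^(n'+2) * hS
        rcases mul_eq_zero.mp hkey with h | h
        · exact absurd (pow_eq_zero_iff (by norm_num)|>.mp h) hne
        · linear_combination h
  -- evaluate at n = p - 1
  have hfin := main (p-1) (by omega)
  have hm2 : 2*m = p - 1 := by omega
  have hpow : (8 : K)^(p-1) = 1 := ZMod.pow_card_sub_one_eq_one h8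
  have e1 : ∑ k ∈ range ((p-1)+1), ((p-1).choose (2*k) : K) * (m.choose k : K)^2
      = ∑ k ∈ range (m+1), ((p-1).choose (2*k) : K) * (m.choose k : K)^2 := by
    refine (Finset.sum_subset (by intro x hx; simp at hx ⊢; omega) ?_).symm
    intro k hk hk'
    simp only [Finset.mem_range] at hk hk'
    rw [Nat.choose_eq_zero_of_lt (show m < k by omega)]
    push_cast; ring
  have e2 : ∑ k ∈ range (m+1), ((p-1).choose (2*k) : K) * (m.choose k : K)^2
      = ∑ k ∈ range (m+1), (m.choose k : K)^2 := by
    refine Finset.sum_congr rfl ?_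
    intro k hk
    simp only [Finset.mem_range] at hk
    rw [choosePm p hp (2*k) (by omega), pow_mul]
    norm_num
  have e3 : ∑ k ∈ range (m+1), (m.choose k : K)^2 = (((2*m).choose m : ℕ) : K) := by
    have hnat : (2*m).choose m = ∑ k ∈ range (m+1), (m.choose k)^2 := by
      rw [two_mul, Nat.add_choose_eq, Finset.Nat.sum_antidiagonal_eq_sum_range_succ_mk]
      refine Finset.sum_congr rfl ?_
      intro k hk
      simp only [Finset.mem_range] at hk
      rw [Nat.choose_symm (by omega)]
      ring
    rw [hnat]
    rw [Nat.cast_sum]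
    simp only [Nat.cast_pow]
  have e4 : (((2*m).choose m : ℕ) : K) = (-1)^m := by
    rw [hm2]
    exact choosePm p hp m (by omega)
  have hm3 : (p-1)/2 = m := by omega
  rw [← ZMod.intCast_eq_intCast_iff, hm3]
  push_cast
  rw [hfin, hpow, e1, e2, e3, e4]
  ring
end

section
/- For an odd prime p, 16 P_{p-2} ≡ (-1)^{(p-1)/2} (mod p), where P_n are the Catalan-Larcombe-French numbers. -/
open Finset

/-- summand -/
noncomputable def Fq (n k : ℕ) : ℚ :=
  (n.choose k : ℚ) * (Nat.centralBinom k : ℚ) * (Nat.centralBinom (n - k) : ℚ)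

/-- certificate polynomial -/
def Rq (n k : ℚ) : ℚ := 4*n^2 - 6*n + 4*k - 8*k^2 - 8*n^2*k + 8*n*k + 8*n*k^2

/-- telescoping certificate -/
noncomputable def Gq (n : ℕ) : ℕ → ℚ
  | 0 => 0
  | (k+1) => Fq (n-1) k * Rq (n : ℚ) ((k : ℚ)+1) / (2*(n:ℚ) - 2*((k:ℚ)+1) - 1)

lemma fac1 (m : ℕ) : ((m+1).factorial : ℚ) = (m+1) * m.factorial := by
  rw [Nat.factorial_succ]; push_cast; ring

lemma fac2 (m : ℕ) : ((2*(m+1)).factorial : ℚ) = (2*m+2)*(2*m+1) * (2*m).factorial := by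
  have h : 2*(m+1) = (2*m+1)+1 := by ring
  rw [h, Nat.factorial_succ, Nat.factorial_succ]; push_cast; ring

lemma facne (m : ℕ) : ((m.factorial : ℚ)) ≠ 0 := by
  exact_mod_cast m.factorial_ne_zero

lemma cb_cast (m : ℕ) : (Nat.centralBinom m : ℚ) = ((2*m).factorial : ℚ) / (m.factorial * m.factorial) := by
  rw [Nat.centralBinom, Nat.cast_choose ℚ (by omega : m ≤ 2*m), show 2*m - m = m by omega]

lemma choose_cast (n k : ℕ) (h : k ≤ n) :
    (n.choose k : ℚ) = (n.factorial : ℚ) / (k.factorial * (n-k).factorial) :=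
  Nat.cast_choose ℚ h

lemma Gq_succ (n k : ℕ) : Gq n (k+1) = Fq (n-1) k * Rq (n : ℚ) ((k : ℚ)+1) / (2*(n:ℚ) - 2*((k:ℚ)+1) - 1) := rfl


lemma cbq (m : ℕ) : ((m:ℚ)+1) * (Nat.centralBinom (m+1) : ℚ) = 2*(2*m+1) * Nat.centralBinom m := by
  exact_mod_cast congrArg (Nat.cast (R := ℚ)) (Nat.succ_mul_centralBinom_succ m)
lemma cb1q : (Nat.centralBinom 1 : ℚ) = 2 := by norm_num [Nat.centralBinom]

set_option maxHeartbeats 2000000 in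
/-- interior case -/
lemma telescope_interior (a b : ℕ) :
    ((a+b+3 : ℕ) : ℚ)^2 * Fq (a+b+3) (a+1)
      - 4*(3*((a+b+3:ℕ):ℚ)^2 - 3*((a+b+3:ℕ):ℚ) + 1) * Fq (a+b+2) (a+1)
      + 32*(((a+b+3:ℕ):ℚ)-1)^2 * Fq (a+b+1) (a+1)
    = Gq (a+b+3) (a+2) - Gq (a+b+3) (a+1) := by
  have e1 : (a+b+3) - 1 = a+b+2 := by omega
  rw [show a+2 = (a+1)+1 by omega, Gq_succ, Gq_succ, e1]
  simp only [Fq]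
  rw [choose_cast (a+b+3) (a+1) (by omega), choose_cast (a+b+2) (a+1) (by omega),
      choose_cast (a+b+1) (a+1) (by omega), choose_cast (a+b+2) a (by omega)]
  have s1 : (a+b+3) - (a+1) = b+2 := by omega
  have s2 : (a+b+2) - (a+1) = b+1 := by omega
  have s3 : (a+b+1) - (a+1) = b := by omega
  have s4 : (a+b+2) - a = b+2 := by omega
  rw [s1, s2, s3, s4]
  rw [cb_cast (a+1), cb_cast (b+2), cb_cast (b+1), cb_cast b, cb_cast a]
  have f1 : ((a+b+3).factorial : ℚ) = (a+b+3)*(a+b+2)*(a+b+1).factorial := by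
    rw [show a+b+3 = (a+b+2)+1 by ring, fac1, show a+b+2 = (a+b+1)+1 by ring, fac1]; push_cast; ring
  have f2 : ((a+b+2).factorial : ℚ) = (a+b+2)*(a+b+1).factorial := by
    rw [show a+b+2 = (a+b+1)+1 by ring, fac1]; push_cast; ring
  have f3 : ((a+1).factorial : ℚ) = (a+1) * a.factorial := fac1 a
  have f4 : ((b+2).factorial : ℚ) = (b+2)*(b+1)*b.factorial := by
    rw [show b+2 = (b+1)+1 by ring, fac1, fac1]; push_cast; ring
  have f5 : ((b+1).factorial : ℚ) = (b+1)*b.factorial := fac1 b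
  have f6 : ((2*(a+1)).factorial : ℚ) = (2*a+2)*(2*a+1)*(2*a).factorial := fac2 a
  have f7 : ((2*(b+1)).factorial : ℚ) = (2*b+2)*(2*b+1)*(2*b).factorial := fac2 b
  have f8 : ((2*(b+2)).factorial : ℚ) = (2*b+4)*(2*b+3)*((2*(b+1)).factorial : ℚ) := by
    have := fac2 (b+1); rw [this, fac2 b]; push_cast; ring
  rw [f8, f7, f6, f1, f2, f3, f4, f5]
  have na : ((a:ℚ)+1) ≠ 0 := by positivity
  have nb1 : ((b:ℚ)+1) ≠ 0 := by positivity
  have nb2 : ((b:ℚ)+2) ≠ 0 := by positivity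
  have n2b1 : (2*(b:ℚ)+1) ≠ 0 := by positivity
  have n2b3 : (2*(b:ℚ)+3) ≠ 0 := by positivity
  have nfa := facne a
  have nfb := facne b
  have nfab := facne (a+b+1)
  have nf2a := facne (2*a)
  have nf2b := facne (2*b)
  have d1 : 2*((a:ℚ)+b+3) - 2*(((a:ℚ)+1)+1) - 1 = 2*b+1 := by push_cast; ring
  have d2 : 2*(((a:ℚ))+b+3) - 2*((a:ℚ)+1) - 1 = 2*b+3 := by push_cast; ring
  simp only [Rq]
  push_cast
  rw [show 2*((a:ℚ)+b+3) - 2*((a:ℚ)+1+1) - 1 = 2*b+1 by ring,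
      show 2*((a:ℚ)+b+3) - 2*((a:ℚ)+1) - 1 = 2*b+3 by ring]
  field_simp
  ring

/-- case k = 0 -/
lemma telescope_zero (c : ℕ) :
    ((c+2 : ℕ) : ℚ)^2 * Fq (c+2) 0
      - 4*(3*((c+2:ℕ):ℚ)^2 - 3*((c+2:ℕ):ℚ) + 1) * Fq (c+1) 0
      + 32*(((c+2:ℕ):ℚ)-1)^2 * Fq c 0
    = Gq (c+2) 1 - Gq (c+2) 0 := by
  have g1 : Gq (c+2) 1 = Fq (c+1) 0 * Rq ((c+2:ℕ) : ℚ) ((0:ℚ)+1) /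
      (2*((c+2:ℕ):ℚ) - 2*((0:ℚ)+1) - 1) := rfl
  have g0 : Gq (c+2) 0 = 0 := rfl
  rw [g1, g0]
  simp only [Fq, Nat.choose_zero_right, Nat.sub_zero, Nat.centralBinom_zero,
    Nat.cast_one, one_mul, mul_one, Nat.cast_zero, Rq]
  have h1 := cbq c
  have h2 := cbq (c+1)
  have na : ((c:ℚ)+1) ≠ 0 := by positivity
  have nb : ((c:ℚ)+2) ≠ 0 := by positivity
  have e2 : (Nat.centralBinom (c+2) : ℚ) = 2*(2*(c+1)+1) * Nat.centralBinom (c+1) / ((c:ℚ)+2) := by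
    rw [eq_div_iff nb]; push_cast at h2 ⊢; linarith [h2]
  have e1 : (Nat.centralBinom (c+1) : ℚ) = 2*(2*c+1) * Nat.centralBinom c / ((c:ℚ)+1) := by
    rw [eq_div_iff na]; linarith [h1]
  have hq0 : (0:ℚ) ≤ (c:ℚ) := Nat.cast_nonneg c
  have h2' : ((c:ℚ)+2) * ((c+2).centralBinom : ℚ) = 2*(2*c+3) * ((c+1).centralBinom : ℚ) := by
    push_cast at h2 ⊢; linarith [h2]
  rw [sub_zero]
  push_cast
  rw [eq_div_iff (by intro h; nlinarith [hq0])]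
  linear_combination (((c:ℚ)+2)*(2*(c:ℚ)+1)) * h2' + (-16*((c:ℚ)+1)^2) * h1

/-- case k = n-1 -/
lemma telescope_sub_one (c : ℕ) :
    ((c+2 : ℕ) : ℚ)^2 * Fq (c+2) (c+1)
      - 4*(3*((c+2:ℕ):ℚ)^2 - 3*((c+2:ℕ):ℚ) + 1) * Fq (c+1) (c+1)
      + 32*(((c+2:ℕ):ℚ)-1)^2 * Fq c (c+1)
    = Gq (c+2) (c+2) - Gq (c+2) (c+1) := by
  have g2 : Gq (c+2) (c+2) = Fq (c+1) (c+1) * Rq ((c+2:ℕ) : ℚ) (((c+1:ℕ):ℚ)+1) /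
      (2*((c+2:ℕ):ℚ) - 2*(((c+1:ℕ):ℚ)+1) - 1) := rfl
  have g1 : Gq (c+2) (c+1) = Fq (c+1) c * Rq ((c+2:ℕ) : ℚ) (((c:ℕ):ℚ)+1) /
      (2*((c+2:ℕ):ℚ) - 2*(((c:ℕ):ℚ)+1) - 1) := rfl
  rw [g2, g1]
  simp only [Fq, show (c+2)-(c+1) = 1 by omega, show (c+1)-(c+1) = 0 by omega,
    show (c+1)-c = 1 by omega,
    Nat.choose_self, Nat.choose_succ_self_right, Nat.centralBinom_zero, cb1q,
    Nat.choose_eq_zero_of_lt (show c < c+1 by omega), Rq]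
  have h1 := cbq c
  have na : ((c:ℚ)+1) ≠ 0 := by positivity
  have e1 : (Nat.centralBinom (c+1) : ℚ) = 2*(2*c+1) * Nat.centralBinom c / ((c:ℚ)+1) := by
    rw [eq_div_iff na]; linarith [h1]
  push_cast
  rw [show 2*((c:ℚ)+2) - 2*((c:ℚ)+1+1) - 1 = -1 by ring,
      show 2*((c:ℚ)+2) - 2*((c:ℚ)+1) - 1 = 1 by ring]
  linear_combination (2*(c:ℚ)*((c:ℚ)+1)) * h1

/-- case k = n -/
lemma telescope_top (c : ℕ) :
    ((c+2 : ℕ) : ℚ)^2 * Fq (c+2) (c+2)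
      - 4*(3*((c+2:ℕ):ℚ)^2 - 3*((c+2:ℕ):ℚ) + 1) * Fq (c+1) (c+2)
      + 32*(((c+2:ℕ):ℚ)-1)^2 * Fq c (c+2)
    = Gq (c+2) (c+3) - Gq (c+2) (c+2) := by
  have g3 : Gq (c+2) (c+3) = Fq (c+1) (c+2) * Rq ((c+2:ℕ) : ℚ) (((c+2:ℕ):ℚ)+1) /
      (2*((c+2:ℕ):ℚ) - 2*(((c+2:ℕ):ℚ)+1) - 1) := rfl
  have g2 : Gq (c+2) (c+2) = Fq (c+1) (c+1) * Rq ((c+2:ℕ) : ℚ) (((c+1:ℕ):ℚ)+1) /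
      (2*((c+2:ℕ):ℚ) - 2*(((c+1:ℕ):ℚ)+1) - 1) := rfl
  rw [g3, g2]
  simp only [Fq, show (c+2)-(c+2) = 0 by omega, show (c+1)-(c+1) = 0 by omega,
    Nat.choose_self, Nat.centralBinom_zero,
    Nat.choose_eq_zero_of_lt (show c+1 < c+2 by omega),
    Nat.choose_eq_zero_of_lt (show c < c+2 by omega), Rq]
  have h2 := cbq (c+1)
  have nb : ((c:ℚ)+2) ≠ 0 := by positivity
  have e2 : (Nat.centralBinom (c+2) : ℚ) = 2*(2*(c+1)+1) * Nat.centralBinom (c+1) / ((c:ℚ)+2) := by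
    rw [eq_div_iff nb]; push_cast at h2 ⊢; linarith [h2]
  have h2' : ((c:ℚ)+2) * ((c+2).centralBinom : ℚ) = 2*(2*c+3) * ((c+1).centralBinom : ℚ) := by
    push_cast at h2 ⊢; linarith [h2]
  push_cast
  rw [show 2*((c:ℚ)+2) - 2*((c:ℚ)+1+1) - 1 = -1 by ring]
  linear_combination ((c:ℚ)+2) * h2'

lemma telescope (n k : ℕ) (hn : 2 ≤ n) (hk : k ≤ n) :
    (n:ℚ)^2 * Fq n k - 4*(3*(n:ℚ)^2 - 3*(n:ℚ) + 1) * Fq (n-1) k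
      + 32*((n:ℚ)-1)^2 * Fq (n-2) k
    = Gq n (k+1) - Gq n k := by
  obtain ⟨c, rfl⟩ : ∃ c, n = c+2 := ⟨n-2, by omega⟩
  rw [show c+2-1 = c+1 by omega, show c+2-2 = c by omega]
  rcases eq_or_ne k 0 with rfl | hk0
  · simpa using telescope_zero c
  rcases eq_or_ne k (c+2) with rfl | hktop
  · rw [show c+2+1 = c+3 by omega]; exact telescope_top c
  rcases eq_or_ne k (c+1) with rfl | hksub
  · rw [show c+1+1 = c+2 by omega]; exact telescope_sub_one c
  · obtain ⟨a, rfl⟩ : ∃ a, k = a+1 := ⟨k-1, by omega⟩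
    obtain ⟨b, rfl⟩ : ∃ b, c = a+b+1 := ⟨c-a-1, by omega⟩
    rw [show a+b+1+2 = a+b+3 by omega, show a+b+1+1 = a+b+2 by omega,
        show a+1+1 = a+2 by omega]
    exact telescope_interior a b

noncomputable def Tq (n : ℕ) : ℚ := ∑ k ∈ Finset.range (n+1), Fq n k

lemma Fq_zero (n k : ℕ) (h : n < k) : Fq n k = 0 := by
  simp [Fq, Nat.choose_eq_zero_of_lt h]

lemma Trec (ν : ℕ) :
    ((ν+2:ℕ):ℚ)^2 * Tq (ν+2)
      = 4*(3*((ν+2:ℕ):ℚ)^2 - 3*((ν+2:ℕ):ℚ) + 1) * Tq (ν+1)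
        - 32*(((ν+2:ℕ):ℚ)-1)^2 * Tq ν := by
  have key : ∀ i ∈ Finset.range (ν+3),
      ((ν+2:ℕ):ℚ)^2 * Fq (ν+2) i
        - 4*(3*((ν+2:ℕ):ℚ)^2 - 3*((ν+2:ℕ):ℚ)+1) * Fq (ν+1) i
        + 32*(((ν+2:ℕ):ℚ)-1)^2 * Fq ν i
      = Gq (ν+2) (i+1) - Gq (ν+2) i := by
    intro i hi
    rw [Finset.mem_range] at hi
    have := telescope (ν+2) i (by omega) (by omega)
    rw [show ν+2-1 = ν+1 by omega, show ν+2-2 = ν by omega] at this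
    exact this
  have hsum := Finset.sum_congr rfl key
  rw [Finset.sum_range_sub (Gq (ν+2))] at hsum
  have hG0 : Gq (ν+2) 0 = 0 := rfl
  have hGtop : Gq (ν+2) (ν+3) = 0 := by
    rw [show ν+3 = (ν+2)+1 by omega, Gq_succ, show (ν+2)-1 = ν+1 by omega,
        Fq_zero (ν+1) (ν+2) (by omega)]
    simp
  rw [hG0, hGtop, sub_zero] at hsum
  rw [Finset.sum_add_distrib, Finset.sum_sub_distrib,
      ← Finset.mul_sum, ← Finset.mul_sum, ← Finset.mul_sum] at hsum
  have s2 : ∑ i ∈ Finset.range (ν+3), Fq (ν+2) i = Tq (ν+2) := rfl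
  have s1 : ∑ i ∈ Finset.range (ν+3), Fq (ν+1) i = Tq (ν+1) := by
    rw [Finset.sum_range_succ, Fq_zero (ν+1) (ν+2) (by omega), add_zero]; rfl
  have s0 : ∑ i ∈ Finset.range (ν+3), Fq ν i = Tq ν := by
    rw [Finset.sum_range_succ, Fq_zero ν (ν+2) (by omega), add_zero,
        Finset.sum_range_succ, Fq_zero ν (ν+1) (by omega), add_zero]; rfl
  rw [s2, s1, s0] at hsum
  linarith [hsum]

def Tn (n : ℕ) : ℕ := ∑ k ∈ Finset.range (n+1),
  n.choose k * Nat.centralBinom k * Nat.centralBinom (n-k)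

lemma Tq_eq (n : ℕ) : Tq n = (Tn n : ℚ) := by
  unfold Tq Tn Fq; push_cast; rfl

lemma Trec_int (ν : ℕ) :
    ((ν+2:ℕ):ℤ)^2 * (Tn (ν+2) : ℤ)
      = 4*(3*((ν+2:ℕ):ℤ)^2 - 3*((ν+2:ℕ):ℤ)+1) * (Tn (ν+1) : ℤ)
        - 32*(((ν+2:ℕ):ℤ)-1)^2 * (Tn ν : ℤ) := by
  have h := Trec ν
  rw [Tq_eq, Tq_eq, Tq_eq] at h
  exact_mod_cast h

lemma Pval (P : ℕ → ℤ) (h0 : P 0 = 1) (h1 : P 1 = 8)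
    (hrec : ∀ n : ℕ, 2 ≤ n →
      (n : ℤ) ^ 2 * P n =
        8 * (3 * (n : ℤ) ^ 2 - 3 * (n : ℤ) + 1) * P (n - 1)
          - 128 * ((n : ℤ) - 1) ^ 2 * P (n - 2)) :
    ∀ n, P n = 2^n * (Tn n : ℤ) := by
  intro n
  induction n using Nat.strong_induction_on with
  | _ n ih =>
    match n with
    | 0 => simpa [Tn] using h0
    | 1 =>
      rw [h1]
      norm_num [Tn, Finset.sum_range_succ, Nat.centralBinom]
    | (ν+2) =>
      have hr := hrec (ν+2) (by omega)
      rw [show ν+2-1 = ν+1 by omega, show ν+2-2 = ν by omega] at hr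
      have i1 := ih (ν+1) (by omega)
      have i0 := ih ν (by omega)
      have ht := Trec_int ν
      have hcan : ((ν+2:ℕ):ℤ)^2 ≠ 0 := by positivity
      apply mul_left_cancel₀ hcan
      rw [hr, i1, i0]
      push_cast at ht ⊢
      linear_combination (-(2:ℤ)^(ν+2)) * ht

section
variable (p : ℕ)

lemma rowA (hp : p.Prime) : ∀ i, i ≤ p - 1 → (((p-1).choose i : ZMod p)) = (-1)^i := by
  haveI : Fact p.Prime := ⟨hp⟩
  intro i
  induction i with
  | zero => intro _; simp
  | succ i ih =>
    intro hi
    have h2 := hp.two_le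
    have pas : p.choose (i+1) = (p-1).choose i + (p-1).choose (i+1) := by
      conv_lhs => rw [show p = (p-1)+1 by omega]
      exact Nat.choose_succ_succ (p-1) i
    have hdvd : p ∣ p.choose (i+1) := hp.dvd_choose_self (by omega) (by omega)
    have hz : ((p.choose (i+1) : ℕ) : ZMod p) = 0 :=
      (ZMod.natCast_eq_zero_iff _ _).mpr hdvd
    have hcast := congrArg (Nat.cast (R := ZMod p)) pas
    push_cast at hcast
    rw [hz, ih (by omega)] at hcast
    linear_combination (-1 : ZMod p) * hcast

lemma rowB (hp : p.Prime) (hp3 : 3 ≤ p) :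
    ∀ i, i ≤ p - 2 → (((p-2).choose i : ZMod p)) = (-1)^i * ((i : ZMod p)+1) := by
  intro i
  induction i with
  | zero => intro _; simp
  | succ i ih =>
    intro hi
    have pas : (p-1).choose (i+1) = (p-2).choose i + (p-2).choose (i+1) := by
      conv_lhs => rw [show p-1 = (p-2)+1 by omega]
      exact Nat.choose_succ_succ (p-2) i
    have hA := rowA p hp (i+1) (by omega)
    have hcast := congrArg (Nat.cast (R := ZMod p)) pas
    push_cast at hcast
    rw [hA, ih (by omega)] at hcast
    push_cast
    linear_combination (-1 : ZMod p) * hcast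

end

/-- For an odd prime `p`, `16 P (p-2) ≡ (-1)^((p-1)/2) (mod p)` for the
Catalan-Larcombe-French numbers. -/
theorem clf_p_sub_two (p : ℕ) (hp : p.Prime) (hodd : Odd p)
    (P : ℕ → ℤ) (h0 : P 0 = 1) (h1 : P 1 = 8)
    (hrec : ∀ n : ℕ, 2 ≤ n →
      (n : ℤ) ^ 2 * P n =
        8 * (3 * (n : ℤ) ^ 2 - 3 * (n : ℤ) + 1) * P (n - 1)
          - 128 * ((n : ℤ) - 1) ^ 2 * P (n - 2)) :
    16 * P (p - 2) ≡ (-1) ^ ((p - 1) / 2) [ZMOD p] := by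
  haveI : Fact p.Prime := ⟨hp⟩
  have h2 := hp.two_le
  have hpne2 : p ≠ 2 := by rintro rfl; rw [Nat.odd_iff] at hodd; omega
  have hp3 : 3 ≤ p := by omega
  obtain ⟨j, rfl⟩ : ∃ j, p = 2*j+3 := by
    obtain ⟨t, ht⟩ := hodd; exact ⟨t-1, by omega⟩
  rw [show 2*j+3-2 = 2*j+1 by omega, show (2*j+3-1)/2 = j+1 by omega,
      ← ZMod.intCast_eq_intCast_iff]
  have hPv := Pval P h0 h1 hrec (2*j+1)
  rw [hPv]
  -- basic facts in ZMod (2j+3)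
  have hq : ((2*j+3 : ℕ) : ZMod (2*j+3)) = 0 := ZMod.natCast_self _
  push_cast at hq
  have h2ne : (2 : ZMod (2*j+3)) ≠ 0 := by
    have : ¬ (2*j+3 ∣ 2) := by intro h; have := Nat.le_of_dvd (by norm_num) h; omega
    intro hz
    exact this ((ZMod.natCast_eq_zero_iff 2 (2*j+3)).mp (by push_cast; exact hz))
  have h8ne : (8 : ZMod (2*j+3)) ≠ 0 := by
    have : ¬ (2*j+3 ∣ 8) := by
      intro h
      have h23 : (2*j+3) ∣ 2^3 := by norm_num at h ⊢; exact h
      have := (Nat.Prime.dvd_of_dvd_pow hp h23)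
      have := Nat.le_of_dvd (by norm_num) this; omega
    intro hz
    exact this ((ZMod.natCast_eq_zero_iff 8 (2*j+3)).mp (by push_cast; exact hz))
  have fermat : (2 : ZMod (2*j+3))^(2*j+2) = 1 := by
    have := ZMod.pow_card_sub_one_eq_one h2ne
    rwa [show (2*j+3)-1 = 2*j+2 by omega] at this
  -- binomial values
  have hcbj1 : ((Nat.centralBinom (j+1) : ℕ) : ZMod (2*j+3)) = (-1)^(j+1) := by
    have e : Nat.centralBinom (j+1) = ((2*j+3)-1).choose (j+1) := by
      unfold Nat.centralBinom; congr 1 <;> omega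
    rw [e, rowA (2*j+3) hp (j+1) (by omega)]
  have hB1 : (((2*j+1).choose j : ℕ) : ZMod (2*j+3)) = (-1)^j * ((j : ZMod (2*j+3))+1) := by
    have := rowB (2*j+3) hp hp3 j (by omega)
    rwa [show (2*j+3)-2 = 2*j+1 by omega] at this
  have hB2 : (((2*j+1).choose (j+1) : ℕ) : ZMod (2*j+3))
      = (-1)^(j+1) * ((j : ZMod (2*j+3))+2) := by
    have := rowB (2*j+3) hp hp3 (j+1) (by omega)
    rw [show (2*j+3)-2 = 2*j+1 by omega] at this
    rw [this]; push_cast; ring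
  have hcbrel : ((j : ZMod (2*j+3))+1) * (-1)^(j+1)
      = -4 * ((Nat.centralBinom j : ℕ) : ZMod (2*j+3)) := by
    have hn := Nat.succ_mul_centralBinom_succ j
    have hc := congrArg (Nat.cast (R := ZMod (2*j+3))) hn
    push_cast at hc
    rw [hcbj1] at hc
    linear_combination hc + 2 * (Nat.centralBinom j : ZMod (2*j+3)) * hq
  -- evaluate Tn (2j+1) mod p
  have hTn : ((Tn (2*j+1) : ℕ) : ZMod (2*j+3)) = (Nat.centralBinom j : ZMod (2*j+3)) := by
    unfold Tn
    push_cast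
    rw [← Finset.sum_subset (s₁ := ({j, j+1} : Finset ℕ))
        (by intro x hx; simp only [Finset.mem_insert, Finset.mem_singleton] at hx
            rcases hx with rfl | rfl <;> · simp only [Finset.mem_range]; omega)
        (by intro x hx hnx
            simp only [Finset.mem_range] at hx
            simp only [Finset.mem_insert, Finset.mem_singleton, not_or] at hnx
            obtain ⟨hxj, hxj1⟩ := hnx
            rcases Nat.lt_or_ge x j with hlt | hge
            · have hd : (2*j+3) ∣ Nat.centralBinom (2*j+1-x) := by
                have : Nat.centralBinom (2*j+1-x) = (2*(2*j+1-x)).choose (2*j+1-x) := rfl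
                rw [this]
                exact hp.dvd_choose (by omega) (by omega) (by omega)
              have : ((Nat.centralBinom (2*j+1-x) : ℕ) : ZMod (2*j+3)) = 0 :=
                (ZMod.natCast_eq_zero_iff _ _).mpr hd
              rw [this]; ring
            · have hge2 : j + 2 ≤ x := by omega
              have hd : (2*j+3) ∣ Nat.centralBinom x := by
                have : Nat.centralBinom x = (2*x).choose x := rfl
                rw [this]
                exact hp.dvd_choose (by omega) (by omega) (by omega)
              have : ((Nat.centralBinom x : ℕ) : ZMod (2*j+3)) = 0 :=
                (ZMod.natCast_eq_zero_iff _ _).mpr hd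
              rw [this]; ring)]
    rw [Finset.sum_insert (by simp only [Finset.mem_singleton]; omega), Finset.sum_singleton]
    rw [show 2*j+1-j = j+1 by omega, show 2*j+1-(j+1) = j by omega]
    rw [hB1, hB2, hcbj1]
    have hodd1 : ((-1 : ZMod (2*j+3)))^(2*j+1) = -1 := Odd.neg_one_pow ⟨j, by ring⟩
    have hev : ((-1 : ZMod (2*j+3)))^(2*j+2) = 1 := Even.neg_one_pow ⟨j+1, by ring⟩
    calc (-1:ZMod (2*j+3))^j * ((j:ZMod (2*j+3))+1) * (Nat.centralBinom j : ZMod (2*j+3)) * (-1)^(j+1)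
          + (-1)^(j+1) * ((j:ZMod (2*j+3))+2) * (-1)^(j+1) * (Nat.centralBinom j : ZMod (2*j+3))
        = ((-1:ZMod (2*j+3))^(2*j+1)) * ((j:ZMod (2*j+3))+1) * (Nat.centralBinom j : ZMod (2*j+3))
          + ((-1:ZMod (2*j+3))^(2*j+2)) * ((j:ZMod (2*j+3))+2) * (Nat.centralBinom j : ZMod (2*j+3)) := by
          ring
      _ = (Nat.centralBinom j : ZMod (2*j+3)) := by rw [hodd1, hev]; ring
  -- final assembly
  push_cast
  rw [hTn]
  apply mul_left_cancel₀ h8ne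
  calc (8 : ZMod (2*j+3)) * (16 * (2^(2*j+1) * (Nat.centralBinom j : ZMod (2*j+3))))
      = 64 * (2^(2*j+2)) * (Nat.centralBinom j : ZMod (2*j+3)) := by ring
    _ = 64 * (Nat.centralBinom j : ZMod (2*j+3)) := by rw [fermat]; ring
    _ = 8 * (-1)^(j+1) := by
        have := hcbrel
        linear_combination (16 : ZMod (2*j+3)) * this - 8*(-1:ZMod (2*j+3))^(j+1) * hq
end

section
/- For an odd prime p and any n with 0 ≤ n ≤ p-1, the Catalan-Larcombe-French numbers satisfy 128^n P_{p-1-n} ≡ (-1)^{(p-1)/2} P_n (mod p). -/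
set_option maxHeartbeats 2000000

open Finset Nat

private def Fc (n k : ℕ) : ℕ := n.choose k * (2*k).choose k * (2*(n-k)).choose (n-k)

private def g (n k : ℕ) : ℚ :=
  (k:ℚ)^2 * (2*n*k - 2*(n:ℚ)^2 + 3*n - 2*k) / ((n:ℚ) * (2*n - 2*k - 1)) * (Fc n k : ℚ)

private def s (n : ℕ) : ℚ := ∑ k ∈ range (n+1), (Fc n k : ℚ)

private lemma fact_ne (n : ℕ) : ((n ! : ℚ)) ≠ 0 := by
  exact_mod_cast n.factorial_ne_zero

private lemma Fc_cast (a b : ℕ) :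
    (Fc (a+b) a : ℚ) = ((a+b)! * (a+a)! * (b+b)!) / (a ! ^3 * b ! ^3) := by
  have h1 : (a+b) - a = b := by omega
  unfold Fc
  rw [h1, show 2*a = a+a by ring, show 2*b = b+b by ring]
  push_cast
  rw [Nat.cast_add_choose, Nat.cast_add_choose, Nat.cast_add_choose]
  field_simp [fact_ne]

private lemma fs (n : ℕ) : ((n+1)! : ℚ) = (n+1) * n ! := by
  exact_mod_cast Nat.factorial_succ n

private lemma key_generic (k j : ℕ) :
    ((k+j+2:ℕ):ℚ)^2 * (Fc (k+j+2) k : ℚ)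
      - 4*(3*((k+j+2:ℕ):ℚ)^2 - 3*((k+j+2:ℕ):ℚ) + 1) * (Fc (k+j+1) k : ℚ)
      + 32*(((k+j+2:ℕ):ℚ)-1)^2 * (Fc (k+j) k : ℚ)
      = g (k+j+2) (k+1) - g (k+j+2) k := by
  have hF0 : (Fc (k+j) k : ℚ) = ((k+j)! * (k+k)! * (j+j)!) / (k ! ^3 * j ! ^3) :=
    Fc_cast k j
  have hF1 : (Fc (k+j+1) k : ℚ)
      = ((k+(j+1))! * (k+k)! * ((j+1)+(j+1))!) / (k ! ^3 * (j+1)! ^3) := by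
    rw [show k+j+1 = k+(j+1) by ring, Fc_cast]
  have hF2 : (Fc (k+j+2) k : ℚ)
      = ((k+(j+2))! * (k+k)! * ((j+2)+(j+2))!) / (k ! ^3 * (j+2)! ^3) := by
    rw [show k+j+2 = k+(j+2) by ring, Fc_cast]
  have hF2' : (Fc (k+j+2) (k+1) : ℚ)
      = (((k+1)+(j+1))! * ((k+1)+(k+1))! * ((j+1)+(j+1))!) / ((k+1)! ^3 * (j+1)! ^3) := by
    rw [show k+j+2 = (k+1)+(j+1) by ring, Fc_cast]
  have e1 : ((k+(j+1))! : ℚ) = ((k:ℚ)+j+1) * (k+j)! := by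
    rw [show k+(j+1) = (k+j)+1 by ring, fs]; push_cast; ring
  have e2 : ((k+(j+2))! : ℚ) = ((k:ℚ)+j+2) * (((k:ℚ)+j+1) * (k+j)!) := by
    rw [show k+(j+2) = (k+j+1)+1 by ring, fs, show k+j+1 = (k+j)+1 by ring, fs]
    push_cast; ring
  have e3 : (((k+1)+(j+1))! : ℚ) = ((k:ℚ)+j+2) * (((k:ℚ)+j+1) * (k+j)!) := by
    rw [show (k+1)+(j+1) = (k+j+1)+1 by ring, fs, show k+j+1 = (k+j)+1 by ring, fs]
    push_cast; ring
  have e4 : (((j+1)+(j+1))! : ℚ) = (2*(j:ℚ)+2) * ((2*(j:ℚ)+1) * (j+j)!) := by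
    rw [show (j+1)+(j+1) = (j+j+1)+1 by ring, fs, show j+j+1 = (j+j)+1 by ring, fs]
    push_cast; ring
  have e5 : (((j+2)+(j+2))! : ℚ)
      = (2*(j:ℚ)+4) * ((2*(j:ℚ)+3) * ((2*(j:ℚ)+2) * ((2*(j:ℚ)+1) * (j+j)!))) := by
    rw [show (j+2)+(j+2) = (j+j+3)+1 by ring, fs, show j+j+3 = (j+j+2)+1 by ring, fs,
        show j+j+2 = (j+j+1)+1 by ring, fs, show j+j+1 = (j+j)+1 by ring, fs]
    try push_cast
    try ring
  have e6 : (((k+1)+(k+1))! : ℚ) = (2*(k:ℚ)+2) * ((2*(k:ℚ)+1) * (k+k)!) := by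
    rw [show (k+1)+(k+1) = (k+k+1)+1 by ring, fs, show k+k+1 = (k+k)+1 by ring, fs]
    try push_cast
    try ring
  have e7 : ((j+1)! : ℚ) = ((j:ℚ)+1) * j ! := by rw [fs]; try push_cast; try ring
  have e8 : ((j+2)! : ℚ) = ((j:ℚ)+2) * (((j:ℚ)+1) * j !) := by
    rw [show j+2 = (j+1)+1 by ring, fs, fs]; push_cast; ring
  have e9 : ((k+1)! : ℚ) = ((k:ℚ)+1) * k ! := by rw [fs]; try push_cast; try ring
  unfold g
  rw [hF0, hF1, hF2, hF2', e1, e2, e3, e4, e5, e6, e7, e8, e9]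
  have f1 := fact_ne k
  have f2 := fact_ne j
  have f3 := fact_ne (k+j)
  have f4 := fact_ne (k+k)
  have f5 := fact_ne (j+j)
  set x := (k ! : ℚ) with hx
  set y := (j ! : ℚ) with hy
  set z := ((k+j)! : ℚ) with hz
  set u := ((k+k)! : ℚ) with hu
  set v := ((j+j)! : ℚ) with hv
  have nk : ((k:ℚ)) ≥ 0 := by positivity
  have nj : ((j:ℚ)) ≥ 0 := by positivity
  have d1 : ((k:ℚ)+j+2) ≠ 0 := by positivity
  have d4 : ((k:ℚ)+1) ≠ 0 := by positivity
  have d5 : ((j:ℚ)+1) ≠ 0 := by positivity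
  have d6 : ((j:ℚ)+2) ≠ 0 := by positivity
  have d2 : 2*((k:ℚ)+j+2) - 2*(k:ℚ) - 1 ≠ 0 := by intro h; linarith
  have d3 : 2*((k:ℚ)+j+2) - 2*((k:ℚ)+1) - 1 ≠ 0 := by intro h; linarith
  have d7 : (2*(j:ℚ)+3) ≠ 0 := by positivity
  have d8 : (2*(j:ℚ)+1) ≠ 0 := by positivity
  push_cast
  rw [show 2*((k:ℚ)+j+2) - 2*(k:ℚ) - 1 = 2*(j:ℚ)+3 by ring,
    show 2*((k:ℚ)+j+2) - 2*((k:ℚ)+1) - 1 = 2*(j:ℚ)+1 by ring]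
  field_simp
  ring

private lemma key_top (i : ℕ) :
    ((i+2:ℕ):ℚ)^2 * (Fc (i+2) (i+1) : ℚ)
      - 4*(3*((i+2:ℕ):ℚ)^2 - 3*((i+2:ℕ):ℚ) + 1) * (Fc (i+1) (i+1) : ℚ)
      + 32*(((i+2:ℕ):ℚ)-1)^2 * (Fc i (i+1) : ℚ)
      = g (i+2) (i+2) - g (i+2) (i+1) := by
  have hcb := Nat.succ_mul_centralBinom_succ (i+1)
  rw [Nat.centralBinom, Nat.centralBinom, show i+1+1 = i+2 by omega] at hcb
  have hB : ((i:ℚ)+2) * ((2*(i+2)).choose (i+2) : ℚ)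
      = 2*(2*(i:ℚ)+3) * ((2*(i+1)).choose (i+1) : ℚ) := by
    have hc := congrArg (fun t : ℕ => (t : ℚ)) hcb
    push_cast at hc
    linear_combination hc
  have h1 : Fc (i+2) (i+1) = (i+2) * ((2*(i+1)).choose (i+1)) * 2 := by
    unfold Fc
    rw [show i+2-(i+1) = 1 by omega, Nat.choose_succ_self_right]
    norm_num
    try ring
  have h2 : Fc (i+1) (i+1) = (2*(i+1)).choose (i+1) := by
    unfold Fc
    rw [show i+1-(i+1) = 0 by omega, Nat.choose_self]
    norm_num
  have h3 : Fc i (i+1) = 0 := by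
    unfold Fc
    rw [Nat.choose_eq_zero_of_lt (by omega)]
    ring
  have h4 : Fc (i+2) (i+2) = (2*(i+2)).choose (i+2) := by
    unfold Fc
    rw [show i+2-(i+2) = 0 by omega, Nat.choose_self]
    norm_num
  have hden1 : ((i+2:ℕ):ℚ) * (2*((i+2:ℕ):ℚ) - 2*((i+2:ℕ):ℚ) - 1) ≠ 0 := by
    have e : ((i+2:ℕ):ℚ) * (2*((i+2:ℕ):ℚ) - 2*((i+2:ℕ):ℚ) - 1) = -((i:ℚ)+2) := by
      push_cast; ring
    rw [e]
    have : ((i:ℚ)+2) > 0 := by positivity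
    intro hc; linarith
  have hden2 : ((i+2:ℕ):ℚ) * (2*((i+2:ℕ):ℚ) - 2*((i+1:ℕ):ℚ) - 1) ≠ 0 := by
    have e : ((i+2:ℕ):ℚ) * (2*((i+2:ℕ):ℚ) - 2*((i+1:ℕ):ℚ) - 1) = ((i:ℚ)+2) := by
      push_cast; ring
    rw [e]
    have : ((i:ℚ)+2) > 0 := by positivity
    intro hc; linarith
  have hg1 : g (i+2) (i+2) = -(((i:ℚ)+2)^2) * ((2*(i+2)).choose (i+2) : ℚ) := by
    unfold g
    rw [h4, div_mul_eq_mul_div, div_eq_iff hden1]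
    push_cast
    ring
  have hg2 : g (i+2) (i+1) = -2*(i:ℚ)*((i:ℚ)+1)^2 * ((2*(i+1)).choose (i+1) : ℚ) := by
    unfold g
    rw [h1, div_mul_eq_mul_div, div_eq_iff hden2]
    push_cast
    ring
  rw [hg1, hg2, h1, h2, h3]
  push_cast
  linear_combination ((i:ℚ)+2) * hB

private lemma key (n k : ℕ) (hn : 2 ≤ n) :
    ((n:ℕ):ℚ)^2 * (Fc n k : ℚ)
      - 4*(3*((n:ℕ):ℚ)^2 - 3*((n:ℕ):ℚ) + 1) * (Fc (n-1) k : ℚ)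
      + 32*(((n:ℕ):ℚ)-1)^2 * (Fc (n-2) k : ℚ)
      = g n (k+1) - g n k := by
  rcases lt_trichotomy k (n-1) with h | h | h
  · obtain ⟨j, rfl⟩ : ∃ j, n = k + j + 2 := ⟨n - 2 - k, by omega⟩
    rw [show k+j+2-1 = k+j+1 by omega, show k+j+2-2 = k+j by omega]
    exact key_generic k j
  · obtain ⟨i, rfl⟩ : ∃ i, n = i + 2 := ⟨n-2, by omega⟩
    have hk : k = i + 1 := by omega
    subst hk
    rw [show i+2-1 = i+1 by omega, show i+2-2 = i by omega]
    exact key_top i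
  · -- k ≥ n
    rcases eq_or_lt_of_le (show n ≤ k by omega) with h2 | h2
    · -- k = n
      subst h2
      have h1 : Fc (n-1) n = 0 := by
        unfold Fc; rw [Nat.choose_eq_zero_of_lt (by omega)]; ring
      have h2' : Fc (n-2) n = 0 := by
        unfold Fc; rw [Nat.choose_eq_zero_of_lt (by omega)]; ring
      have h3 : Fc n (n+1) = 0 := by
        unfold Fc; rw [Nat.choose_eq_zero_of_lt (by omega)]; ring
      have h4 : Fc n n = (2*n).choose n := by
        unfold Fc; rw [Nat.sub_self, Nat.choose_self]; norm_num
      unfold g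
      rw [h1, h2', h3, h4]
      have d1 : ((n:ℕ):ℚ) ≠ 0 := by
        simp only [ne_eq, Nat.cast_eq_zero]; omega
      push_cast
      field_simp
      ring
    · -- k > n
      have h1 : Fc n k = 0 := by
        unfold Fc; rw [Nat.choose_eq_zero_of_lt (by omega)]; ring
      have h2' : Fc (n-1) k = 0 := by
        unfold Fc; rw [Nat.choose_eq_zero_of_lt (by omega)]; ring
      have h3 : Fc (n-2) k = 0 := by
        unfold Fc; rw [Nat.choose_eq_zero_of_lt (by omega)]; ring
      have h4 : Fc n (k+1) = 0 := by
        unfold Fc; rw [Nat.choose_eq_zero_of_lt (by omega)]; ring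
      unfold g
      rw [h1, h2', h3, h4]
      push_cast
      ring

private lemma srec (q : ℕ) :
    ((q:ℚ)+2)^2 * s (q+2)
      = 4*(3*((q:ℚ)+2)^2 - 3*((q:ℚ)+2) + 1) * s (q+1) - 32*((q:ℚ)+1)^2 * s q := by
  have tele : ∑ k ∈ range (q+3), (g (q+2) (k+1) - g (q+2) k)
      = g (q+2) (q+3) - g (q+2) 0 := Finset.sum_range_sub (g (q+2)) (q+3)
  have hkey : ∀ k ∈ range (q+3),
      (((q+2:ℕ)):ℚ)^2 * (Fc (q+2) k : ℚ)
        - 4*(3*((q+2:ℕ):ℚ)^2 - 3*((q+2:ℕ):ℚ) + 1) * (Fc (q+1) k : ℚ)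
        + 32*(((q+2:ℕ):ℚ)-1)^2 * (Fc q k : ℚ)
      = g (q+2) (k+1) - g (q+2) k := by
    intro k _
    have := key (q+2) k (by omega)
    rwa [show q+2-1 = q+1 by omega, show q+2-2 = q by omega] at this
  have hsum := Finset.sum_congr rfl hkey
  rw [tele] at hsum
  have hg0 : g (q+2) 0 = 0 := by unfold g; norm_num
  have hgt : g (q+2) (q+3) = 0 := by
    unfold g
    have : Fc (q+2) (q+3) = 0 := by
      unfold Fc; rw [Nat.choose_eq_zero_of_lt (by omega)]; ring
    rw [this]; norm_num
  rw [hg0, hgt] at hsum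
  have z1 : Fc (q+1) (q+2) = 0 := by
    unfold Fc; rw [Nat.choose_eq_zero_of_lt (by omega)]; ring
  have z2 : Fc q (q+2) = 0 := by
    unfold Fc; rw [Nat.choose_eq_zero_of_lt (by omega)]; ring
  have z3 : Fc q (q+1) = 0 := by
    unfold Fc; rw [Nat.choose_eq_zero_of_lt (by omega)]; ring
  rw [Finset.sum_add_distrib, Finset.sum_sub_distrib, ← Finset.mul_sum, ← Finset.mul_sum,
    ← Finset.mul_sum] at hsum
  have s2 : ∑ k ∈ range (q+3), (Fc (q+2) k : ℚ) = s (q+2) := rfl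
  have s1 : ∑ k ∈ range (q+3), (Fc (q+1) k : ℚ) = s (q+1) := by
    rw [show q+3 = (q+2)+1 by omega, Finset.sum_range_succ, z1]
    simp [s]
  have s0 : ∑ k ∈ range (q+3), (Fc q k : ℚ) = s q := by
    rw [show q+3 = (q+2)+1 by omega, Finset.sum_range_succ, z2,
        show q+2 = (q+1)+1 by omega, Finset.sum_range_succ, z3]
    simp [s]
  rw [s2, s1, s0] at hsum
  push_cast at hsum
  linarith

private lemma P_eq (P : ℕ → ℤ) (h0 : P 0 = 1) (h1 : P 1 = 8)
    (hrec : ∀ n : ℕ, 2 ≤ n →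
      (n : ℤ) ^ 2 * P n =
        8 * (3 * (n : ℤ) ^ 2 - 3 * (n : ℤ) + 1) * P (n - 1)
          - 128 * ((n : ℤ) - 1) ^ 2 * P (n - 2)) :
    ∀ n : ℕ, (P n : ℚ) = 2^n * s n := by
  intro n
  induction n using Nat.strong_induction_on with
  | _ n ih =>
    match n with
    | 0 =>
      rw [h0]
      simp [s, Fc]
    | 1 =>
      rw [h1]
      rw [show s 1 = ∑ k ∈ range 2, (Fc 1 k : ℚ) from rfl]
      simp [Finset.sum_range_succ, Fc]
      norm_num
    | (q+2) =>
      have hq := hrec (q+2) (by omega)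
      rw [show q+2-1 = q+1 by omega, show q+2-2 = q by omega] at hq
      have hqQ : ((q:ℚ)+2)^2 * (P (q+2) : ℚ)
          = 8*(3*((q:ℚ)+2)^2 - 3*((q:ℚ)+2) + 1) * (P (q+1) : ℚ)
            - 128*((q:ℚ)+1)^2 * (P q : ℚ) := by
        have hc := congrArg (fun z : ℤ => (z : ℚ)) hq
        push_cast at hc
        linear_combination hc
      have i1 := ih (q+1) (by omega)
      have i0 := ih q (by omega)
      have hs := srec q
      have hcancel : ((q:ℚ)+2)^2 * (P (q+2) : ℚ)
          = ((q:ℚ)+2)^2 * (2^(q+2) * s (q+2)) := by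
        linear_combination hqQ + 8*(3*((q:ℚ)+2)^2 - 3*((q:ℚ)+2) + 1)*i1
          - 128*((q:ℚ)+1)^2*i0 - (2:ℚ)^(q+2)*hs
      have hne : (((q:ℚ)+2)^2) ≠ 0 := by positivity
      exact mul_left_cancel₀ hne hcancel

private lemma P_int (P : ℕ → ℤ) (h0 : P 0 = 1) (h1 : P 1 = 8)
    (hrec : ∀ n : ℕ, 2 ≤ n →
      (n : ℤ) ^ 2 * P n =
        8 * (3 * (n : ℤ) ^ 2 - 3 * (n : ℤ) + 1) * P (n - 1)
          - 128 * ((n : ℤ) - 1) ^ 2 * P (n - 2)) :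
    ∀ n : ℕ, P n = 2^n * ∑ k ∈ range (n+1), (Fc n k : ℤ) := by
  intro n
  have h := P_eq P h0 h1 hrec n
  have h2 : (P n : ℚ) = ((2^n * ∑ k ∈ range (n+1), (Fc n k : ℤ) : ℤ) : ℚ) := by
    rw [h]
    unfold s
    push_cast
    ring
  exact_mod_cast h2

/-- For an odd prime `p` and `0 ≤ n ≤ p-1`,
`128^n P (p-1-n) ≡ (-1)^((p-1)/2) P n (mod p)`. -/
theorem clf_symmetry (p : ℕ) (hp : p.Prime) (hodd : Odd p)
    (P : ℕ → ℤ) (h0 : P 0 = 1) (h1 : P 1 = 8)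
    (hrec : ∀ n : ℕ, 2 ≤ n →
      (n : ℤ) ^ 2 * P n =
        8 * (3 * (n : ℤ) ^ 2 - 3 * (n : ℤ) + 1) * P (n - 1)
          - 128 * ((n : ℤ) - 1) ^ 2 * P (n - 2)) :
    ∀ n : ℕ, n ≤ p - 1 →
      128 ^ n * P (p - 1 - n) ≡ (-1) ^ ((p - 1) / 2) * P n [ZMOD p] := by
  haveI : Fact p.Prime := ⟨hp⟩
  have hp2 : 2 ≤ p := hp.two_le
  haveI : NeZero p := ⟨by omega⟩
  obtain ⟨m, hm⟩ : ∃ m, p = 2*m+1 := by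
    obtain ⟨t, ht⟩ := hodd; exact ⟨t, by omega⟩
  have hm1 : 1 ≤ m := by omega
  have hPz : ∀ n : ℕ, ((P n : ZMod p))
      = 2^n * ∑ k ∈ range (n+1), ((Fc n k : ℕ) : ZMod p) := by
    intro n
    have h := P_int P h0 h1 hrec n
    have h2 := congrArg (fun z : ℤ => (z : ZMod p)) h
    push_cast at h2
    exact h2
  have hchoose : ∀ k, k ≤ p-1 → (((p-1).choose k : ℕ) : ZMod p) = (-1)^k := by
    intro k
    induction k with
    | zero => intro _; simp
    | succ i ihc =>
      intro hk
      have hi := ihc (by omega)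
      have hpas : (p-1).choose i + (p-1).choose (i+1) = p.choose (i+1) := by
        have hps := Nat.choose_succ_succ (p-1) i
        simp only [Nat.succ_eq_add_one] at hps
        rw [show p-1+1 = p by omega] at hps
        omega
      have hdvd : p ∣ p.choose (i+1) := hp.dvd_choose_self (by omega) (by omega)
      have hz : ((p.choose (i+1) : ℕ) : ZMod p) = 0 :=
        (ZMod.natCast_eq_zero_iff _ _).mpr hdvd
      have hcast := congrArg (fun t : ℕ => (t : ZMod p)) hpas
      push_cast at hcast
      rw [hz, hi] at hcast
      have hres : (((p-1).choose (i+1) : ℕ) : ZMod p) = -(-1)^i := by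
        linear_combination hcast
      rw [hres, pow_succ]
      ring
  -- Claim B
  have hB : ((P (p-1) : ZMod p)) = (-1)^m := by
    have e := hPz (p-1)
    rw [show p-1+1 = p by omega] at e
    have h2ne : (2 : ZMod p) ≠ 0 := by
      intro h
      have h2' : ((2:ℕ) : ZMod p) = 0 := by exact_mod_cast h
      have hd := (ZMod.natCast_eq_zero_iff 2 p).mp h2'
      have := Nat.le_of_dvd (by norm_num) hd
      omega
    have h2p : (2 : ZMod p)^(p-1) = 1 := ZMod.pow_card_sub_one_eq_one h2ne
    have hsum : ∑ k ∈ range p, ((Fc (p-1) k : ℕ) : ZMod p)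
        = ((Fc (p-1) m : ℕ) : ZMod p) := by
      apply Finset.sum_eq_single_of_mem
      · exact Finset.mem_range.mpr (by omega)
      · intro b hb hbm
        have hbp : b < p := Finset.mem_range.mp hb
        rcases lt_or_gt_of_ne hbm with hlt | hgt
        · have hdvd : p ∣ (2*(p-1-b)).choose (p-1-b) := by
            have hh := hp.dvd_choose_add (a := p-1-b) (b := p-1-b)
              (by omega) (by omega) (by omega)
            rwa [show p-1-b + (p-1-b) = 2*(p-1-b) by omega] at hh
          have hdF : p ∣ Fc (p-1) b := Dvd.dvd.mul_left hdvd _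
          exact (ZMod.natCast_eq_zero_iff _ _).mpr hdF
        · have hdvd : p ∣ (2*b).choose b := by
            have hh := hp.dvd_choose_add (a := b) (b := b)
              (by omega) (by omega) (by omega)
            rwa [show b + b = 2*b by omega] at hh
          have hdF : p ∣ Fc (p-1) b := by
            unfold Fc
            exact Dvd.dvd.mul_right (Dvd.dvd.mul_left hdvd _) _
          exact (ZMod.natCast_eq_zero_iff _ _).mpr hdF
    have hFm : Fc (p-1) m = ((p-1).choose m)^3 := by
      unfold Fc
      rw [show p-1-m = m by omega, show 2*m = p-1 by omega]
      ring
    rw [hsum, hFm] at e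
    push_cast at e
    rw [hchoose m (by omega), h2p] at e
    have hcube : ((-1 : ZMod p)^m)^3 = (-1)^m := by
      rw [← pow_mul, show m*3 = m+2*m by ring, pow_add, pow_mul, neg_one_sq, one_pow, mul_one]
    rw [one_mul, hcube] at e
    exact e
  -- Claim A
  have hA : ∀ k, k ≤ p-1 →
      (128 : ZMod p)^k * ((P (p-1-k) : ZMod p))
        = ((P (p-1) : ZMod p)) * ((P k : ZMod p)) := by
    intro k
    induction k using Nat.strong_induction_on with
    | _ k ih =>
      match k with
      | 0 =>
        intro _
        rw [h0]
        push_cast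
        simp
      | 1 =>
        intro hk1
        have hc := congrArg (fun z : ℤ => (z : ZMod p)) (hrec p (by omega))
        push_cast at hc
        rw [ZMod.natCast_self] at hc
        rw [h1, show p-1-1 = p-2 by omega]
        push_cast
        linear_combination hc
      | (k+2) =>
        intro hk
        have I1 := ih k (by omega) (by omega)
        have I2 := ih (k+1) (by omega) (by omega)
        have E1int := hrec (p-1-k) (by omega)
        rw [show p-1-k-1 = p-1-(k+1) by omega, show p-1-k-2 = p-1-(k+2) by omega] at E1int
        have E1 := congrArg (fun z : ℤ => (z : ZMod p)) E1int
        push_cast at E1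
        have hc1 : ((p-1-k : ℕ) : ZMod p) = -(k : ZMod p)-1 := by
          rw [show p-1-k = p-(k+1) by omega, Nat.cast_sub (by omega), ZMod.natCast_self]
          push_cast
          ring
        rw [hc1] at E1
        have E2int := hrec (k+2) (by omega)
        rw [show k+2-1 = k+1 by omega, show k+2-2 = k by omega] at E2int
        have E2 := congrArg (fun z : ℤ => (z : ZMod p)) E2int
        push_cast at E2
        have hne : ((k : ZMod p)+2) ≠ 0 := by
          have hnn : ((k+2 : ℕ) : ZMod p) ≠ 0 := by
            rw [Ne, ZMod.natCast_eq_zero_iff]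
            intro hdvd
            have := Nat.le_of_dvd (by omega) hdvd
            omega
          push_cast at hnn
          exact hnn
        have hmain : ((k : ZMod p)+2)^2 * ((128 : ZMod p)^(k+2) * ((P (p-1-(k+2)) : ZMod p)))
            = ((k : ZMod p)+2)^2 * (((P (p-1) : ZMod p)) * ((P (k+2) : ZMod p))) := by
          linear_combination (128 : ZMod p)^(k+1) * E1 - ((P (p-1) : ZMod p)) * E2
            - 128*((k : ZMod p)+1)^2 * I1
            + 8*(3*(k : ZMod p)^2+9*(k : ZMod p)+7) * I2
        exact mul_left_cancel₀ (pow_ne_zero 2 hne) hmain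
  intro n hn
  rw [← ZMod.intCast_eq_intCast_iff]
  push_cast
  rw [show (p-1)/2 = m by omega]
  rw [hA n hn, hB]
end

section
/- For an odd prime p and 0 ≤ n ≤ p-1, p divides P_n if and only if p divides P_{p-1-n}, where P_n are the Catalan-Larcombe-French numbers. -/
/-- For an odd prime `p` and `0 ≤ n ≤ p-1`, `p ∣ P n ↔ p ∣ P (p-1-n)` for the
Catalan-Larcombe-French numbers. -/
theorem clf_dvd_symmetry (p : ℕ) (hp : p.Prime) (hodd : Odd p)
    (P : ℕ → ℤ) (h0 : P 0 = 1) (h1 : P 1 = 8)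
    (hrec : ∀ n : ℕ, 2 ≤ n →
      (n : ℤ) ^ 2 * P n =
        8 * (3 * (n : ℤ) ^ 2 - 3 * (n : ℤ) + 1) * P (n - 1)
          - 128 * ((n : ℤ) - 1) ^ 2 * P (n - 2)) :
    ∀ n : ℕ, n ≤ p - 1 → ((p : ℤ) ∣ P n ↔ (p : ℤ) ∣ P (p - 1 - n)) := by
  haveI := Fact.mk hp
  have hp2 : p ≠ 2 := by
    rintro rfl
    simp [Nat.odd_iff] at hodd
  have hp3 : 3 ≤ p := by
    have := hp.two_le; omega
  -- 128 is a unit mod p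
  have h128 : (128 : ZMod p) ≠ 0 := by
    have h : (128 : ZMod p) = ((128 : ℕ) : ZMod p) := by norm_num
    rw [h, Ne, ZMod.natCast_eq_zero_iff]
    intro hdvd
    have h27 : (128 : ℕ) = 2 ^ 7 := by norm_num
    rw [h27] at hdvd
    have := hp.dvd_of_dvd_pow hdvd
    have := Nat.le_of_dvd (by norm_num) this
    omega
  -- naturals 0 < n < p are units mod p
  have hkey : ∀ n : ℕ, 0 < n → n < p → ((n : ℕ) : ZMod p) ≠ 0 := by
    intro n hn1 hn2
    rw [Ne, ZMod.natCast_eq_zero_iff]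
    intro hdvd
    have := Nat.le_of_dvd hn1 hdvd
    omega
  -- main congruence: P(p-1-n) * 128^n ≡ P(p-1) * P(n)  (mod p)
  have main : ∀ n : ℕ, n ≤ p - 1 →
      ((P (p - 1 - n) : ℤ) : ZMod p) * 128 ^ n
        = ((P (p - 1) : ℤ) : ZMod p) * ((P n : ℤ) : ZMod p) := by
    intro n
    induction n using Nat.strong_induction_on with
    | _ n ih =>
      intro hn
      rcases Nat.lt_or_ge n 2 with hlt | hge
      · interval_cases n
        · simp [h0]
        · -- n = 1: use the recurrence at n = p
          have E := congrArg (fun z : ℤ => (z : ZMod p)) (hrec p (by omega))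
          push_cast at E
          rw [ZMod.natCast_self] at E
          have hidx : p - 1 - 1 = p - 2 := by omega
          rw [hidx, h1, pow_one]
          push_cast
          linear_combination E
      · obtain ⟨k, rfl⟩ : ∃ k, n = k + 2 := ⟨n - 2, by omega⟩
        have hkp : k + 3 ≤ p := by omega
        -- reversed recurrence: recurrence at index p - 1 - k
        have E1 := congrArg (fun z : ℤ => (z : ZMod p)) (hrec (p - 1 - k) (by omega))
        push_cast at E1
        rw [show p - 1 - k - 1 = p - 1 - (k + 1) by omega,
            show p - 1 - k - 2 = p - 1 - (k + 2) by omega] at E1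
        have hm_cast : ((p - 1 - k : ℕ) : ZMod p) = -((k : ZMod p) + 1) := by
          have hmk : ((p - 1 - k) + (k + 1) : ℕ) = p := by omega
          have h' := congrArg (fun m : ℕ => (m : ZMod p)) hmk
          push_cast at h'
          rw [ZMod.natCast_self] at h'
          linear_combination h'
        rw [hm_cast] at E1
        -- forward recurrence at k + 2
        have E2 := congrArg (fun z : ℤ => (z : ZMod p)) (hrec (k + 2) (by omega))
        push_cast at E2
        have IH1 := ih (k + 1) (by omega) (by omega)
        have IH0 := ih k (by omega) (by omega)
        have hk2 : ((k : ZMod p) + 2) ≠ 0 := by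
          have := hkey (k + 2) (by omega) (by omega)
          push_cast at this
          convert this using 2
        apply mul_left_cancel₀ (pow_ne_zero 2 hk2)
        linear_combination (128 : ZMod p) ^ (k + 1) * E1
          + 8 * (3 * ((k : ZMod p) + 1) ^ 2 + 3 * ((k : ZMod p) + 1) + 1) * IH1
          - 128 * ((k : ZMod p) + 1) ^ 2 * IH0
          - ((P (p - 1) : ℤ) : ZMod p) * E2
  -- P (p-1) is a unit mod p
  have hc : ((P (p - 1) : ℤ) : ZMod p) ≠ 0 := by
    have h' : (128 : ZMod p) ^ (p - 1)
        = ((P (p - 1) : ℤ) : ZMod p) * ((P (p - 1) : ℤ) : ZMod p) := by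
      have := main (p - 1) le_rfl
      rw [Nat.sub_self, h0] at this
      push_cast at this
      linear_combination this
    intro hc0
    rw [hc0, mul_zero] at h'
    exact pow_ne_zero (p - 1) h128 h'
  -- conclusion
  intro n hn
  rw [← ZMod.intCast_zmod_eq_zero_iff_dvd, ← ZMod.intCast_zmod_eq_zero_iff_dvd]
  have hmain := main n hn
  constructor
  · intro h
    have h2 : ((P (p - 1 - n) : ℤ) : ZMod p) * 128 ^ n = 0 := by
      rw [hmain, h, mul_zero]
    rcases mul_eq_zero.mp h2 with h' | h'
    · exact h'
    · exact absurd h' (pow_ne_zero n h128)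
  · intro h
    have h2 : ((P (p - 1) : ℤ) : ZMod p) * ((P n : ℤ) : ZMod p) = 0 := by
      rw [← hmain, h, zero_mul]
    rcases mul_eq_zero.mp h2 with h' | h'
    · exact absurd h' hc
    · exact h'
end

section
/- For an odd prime p, f_{p-1} ≡ 1 (mod p), where f_n = ∑_{r=0}^{n} C(n,r)^3 is the n-th Franel number. -/
/-- The Franel numbers. -/
def franel (n : ℕ) : ℕ := ∑ r ∈ Finset.range (n + 1), (n.choose r) ^ 3

lemma choose_p_sub_one_cast (p : ℕ) (hp : p.Prime) (r : ℕ) (h : r ≤ p - 1) :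
    (((p - 1).choose r : ℕ) : ZMod p) = (-1) ^ r := by
  induction r with
  | zero => simp
  | succ r ih =>
    have hp1 : p - 1 + 1 = p := Nat.succ_pred_eq_of_pos hp.pos
    have hr : r ≤ p - 1 := le_of_lt (Nat.lt_of_lt_of_le (Nat.lt_succ_self r) h)
    have hpas : p.choose (r + 1) = (p - 1).choose r + (p - 1).choose (r + 1) := by
      conv_lhs => rw [← hp1]
      exact Nat.choose_succ_succ (p - 1) r
    have hdvd : p ∣ p.choose (r + 1) :=
      hp.dvd_choose_self (Nat.succ_ne_zero r) (by omega)
    have h0 : ((p.choose (r + 1) : ℕ) : ZMod p) = 0 := by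
      exact_mod_cast (ZMod.natCast_eq_zero_iff _ _).mpr hdvd
    have := congrArg (fun n : ℕ => (n : ZMod p)) hpas
    simp only [Nat.cast_add, h0] at this
    rw [ih hr] at this
    have h2 : (((p - 1).choose (r + 1) : ℕ) : ZMod p) = -(-1) ^ r := by
      linear_combination -this
    rw [h2]; ring
/-- For an odd prime `p`, `f (p-1) ≡ 1 (mod p)`. -/
theorem franel_p_sub_one (p : ℕ) (hp : p.Prime) (hodd : Odd p) :
    franel (p - 1) ≡ 1 [MOD p] := by
  have hp1 : p - 1 + 1 = p := Nat.succ_pred_eq_of_pos hp.pos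
  have key : ((franel (p - 1) : ℕ) : ZMod p) = ((1 : ℕ) : ZMod p) := by
    unfold franel
    push_cast
    rw [Finset.sum_congr rfl (fun r hr => (by
      rw [choose_p_sub_one_cast p hp r (Nat.lt_succ_iff.mp (Finset.mem_range.mp hr)),
        ← pow_mul, mul_comm r 3, pow_mul] : (((p - 1).choose r : ℕ) : ZMod p) ^ 3 = ((-1 : ZMod p) ^ 3) ^ r))]
    norm_num
    rw [hp1]
    exact fun h => absurd h (Nat.not_even_iff_odd.mpr hodd)
  exact (ZMod.natCast_eq_natCast_iff _ _ _).mp key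
end

section
/- For an odd prime p and 0 ≤ n ≤ p-1, the Franel numbers satisfy f_n ≡ (-8)^n f_{p-1-n} (mod p). In particular, p divides f_n if and only if p divides f_{p-1-n}. -/
set_option maxHeartbeats 4000000

/-- Pure-field algebraic identity underlying the WZ certificate for Cusick's recurrence. -/
lemma franel_alg (nv jv x y z w v : ℚ) (hj1 : jv+1 ≠ 0) (hnj : nv+1-jv ≠ 0)
    (h1 : y*(jv+1) = x*(nv-jv)) (h2 : w*(jv+1) = z*(nv+1-jv))
    (hw : w = x+y) (hv : v = z+w) :
    (nv+2)^2*v^3 - (7*nv^2+21*nv+16)*w^3 - 8*(nv+1)^2*y^3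
      = -((nv+2)^2*w^3 + 3*(nv+1)*(nv+2)*w^2*y + 6*(nv+1)^2*w*y^2 + 4*(nv+1)^2*y^3)
        - (-((nv+2)^2*z^3 + 3*(nv+1)*(nv+2)*z^2*x + 6*(nv+1)^2*z*x^2 + 4*(nv+1)^2*x^3)) := by
  subst hw hv
  have hz : z = ((x+y)*(jv+1))/(nv+1-jv) := by rw [eq_div_iff hnj]; linarith
  have hy : y = (x*(nv-jv))/(jv+1) := by rw [eq_div_iff hj1]; linarith
  rw [hz, hy]
  field_simp
  ring

/-- WZ certificate for Cusick's recurrence. -/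
def franelHc (n j : ℕ) : ℤ :=
  ((n:ℤ)+2)^2 * ((n+1).choose j : ℤ) ^ 3
    + 3*((n:ℤ)+1)*((n:ℤ)+2) * ((n+1).choose j : ℤ) ^ 2 * (n.choose j : ℤ)
    + 6*((n:ℤ)+1)^2 * ((n+1).choose j : ℤ) * (n.choose j : ℤ) ^ 2
    + 4*((n:ℤ)+1)^2 * (n.choose j : ℤ) ^ 3

def franelT (n : ℕ) : ℕ → ℤ
  | 0 => 0
  | (k+1) => - franelHc n k

lemma franel_wz_step (n k : ℕ) :
    ((n:ℤ)+2)^2 * ((n+2).choose k : ℤ) ^ 3 - (7*(n:ℤ)^2+21*(n:ℤ)+16) * ((n+1).choose k : ℤ) ^ 3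
      - 8*((n:ℤ)+1)^2 * (n.choose k : ℤ) ^ 3 = franelT n (k+1) - franelT n k := by
  match k with
  | 0 => simp [franelHc, franelT]; ring
  | (j+1) =>
    simp only [franelT, franelHc]
    rcases le_or_gt j n with hj | hj
    · have h1 : ((n.choose (j+1) : ℕ) : ℚ) * ((j:ℚ)+1) = (n.choose j : ℚ) * ((n:ℚ) - j) := by
        have h := congrArg (Nat.cast : ℕ → ℚ) (Nat.choose_succ_right_eq n j)
        push_cast [Nat.cast_sub hj] at h
        convert h using 2
      have h2 : (((n+1).choose (j+1) : ℕ) : ℚ) * ((j:ℚ)+1)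
          = ((n+1).choose j : ℚ) * ((n:ℚ)+1 - j) := by
        have h := congrArg (Nat.cast : ℕ → ℚ) (Nat.choose_succ_right_eq (n+1) j)
        push_cast [Nat.cast_sub (le_trans hj (Nat.le_succ n))] at h
        convert h using 2
      have hw : (((n+1).choose (j+1) : ℕ) : ℚ) = (n.choose j : ℚ) + (n.choose (j+1) : ℚ) := by
        rw [Nat.choose_succ_succ]; push_cast; ring
      have hv : (((n+2).choose (j+1) : ℕ) : ℚ)
          = ((n+1).choose j : ℚ) + ((n+1).choose (j+1) : ℚ) := by
        rw [show n+2 = (n+1)+1 from rfl, Nat.choose_succ_succ]; push_cast; ring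
      have hj1 : ((j:ℚ)+1) ≠ 0 := by positivity
      have hnj : ((n:ℚ)+1-(j:ℚ)) ≠ 0 := by
        have : (j:ℚ) ≤ n := by exact_mod_cast hj
        intro hcon; nlinarith
      have key := franel_alg (n:ℚ) (j:ℚ) (n.choose j : ℚ) (n.choose (j+1) : ℚ)
        ((n+1).choose j : ℚ) ((n+1).choose (j+1) : ℚ) ((n+2).choose (j+1) : ℚ)
        hj1 hnj h1 h2 hw hv
      qify
      push_cast
      linear_combination key
    · rcases Nat.lt_or_ge j (n+2) with hj2 | hj2
      · have hjeq : j = n+1 := by omega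
        subst hjeq
        rw [Nat.choose_eq_zero_of_lt (by omega : n < n+1),
            Nat.choose_eq_zero_of_lt (by omega : n < n+1+1),
            Nat.choose_eq_zero_of_lt (by omega : n+1 < n+1+1),
            Nat.choose_self, Nat.choose_self]
        push_cast; ring
      · rw [Nat.choose_eq_zero_of_lt (by omega : n < j),
            Nat.choose_eq_zero_of_lt (by omega : n < j+1),
            Nat.choose_eq_zero_of_lt (by omega : n+1 < j+1),
            Nat.choose_eq_zero_of_lt (by omega : n+2 < j+1),
            Nat.choose_eq_zero_of_lt (by omega : n+1 < j)]
        push_cast; ring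

lemma franel_cast (m : ℕ) : (franel m : ℤ) = ∑ r ∈ Finset.range (m+1), (m.choose r : ℤ)^3 := by
  unfold franel; push_cast; rfl

/-- Cusick's recurrence for the Franel numbers. -/
lemma franel_cusick (n : ℕ) :
    ((n:ℤ)+2)^2 * franel (n+2)
      = (7*(n:ℤ)^2+21*(n:ℤ)+16) * franel (n+1) + 8*((n:ℤ)+1)^2 * franel n := by
  have tel : ∑ k ∈ Finset.range (n+3),
      (((n:ℤ)+2)^2 * ((n+2).choose k : ℤ) ^ 3
        - (7*(n:ℤ)^2+21*(n:ℤ)+16) * ((n+1).choose k : ℤ) ^ 3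
        - 8*((n:ℤ)+1)^2 * (n.choose k : ℤ) ^ 3) = franelT n (n+3) - franelT n 0 := by
    rw [Finset.sum_congr rfl (fun k _ => franel_wz_step n k), Finset.sum_range_sub]
  have hT0 : franelT n 0 = 0 := rfl
  have hT3 : franelT n (n+3) = 0 := by
    show - franelHc n (n+2) = 0
    unfold franelHc
    rw [Nat.choose_eq_zero_of_lt (by omega : n+1 < n+2),
        Nat.choose_eq_zero_of_lt (by omega : n < n+2)]
    ring
  rw [hT0, hT3] at tel
  have e1 : ∑ k ∈ Finset.range (n+3), ((n+2).choose k : ℤ)^3 = franel (n+2) := by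
    rw [franel_cast]
  have e2 : ∑ k ∈ Finset.range (n+3), ((n+1).choose k : ℤ)^3 = franel (n+1) := by
    rw [franel_cast, Finset.sum_range_succ (fun k => ((n+1).choose k : ℤ)^3) (n+2),
        Nat.choose_eq_zero_of_lt (by omega : n+1 < n+2)]
    push_cast; ring
  have e3 : ∑ k ∈ Finset.range (n+3), (n.choose k : ℤ)^3 = franel n := by
    rw [franel_cast, Finset.sum_range_succ (fun k => ((n).choose k : ℤ)^3) (n+2),
        Finset.sum_range_succ (fun k => ((n).choose k : ℤ)^3) (n+1),
        Nat.choose_eq_zero_of_lt (by omega : n < n+2),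
        Nat.choose_eq_zero_of_lt (by omega : n < n+1)]
    push_cast; ring
  simp only [Finset.sum_sub_distrib, ← Finset.mul_sum, e1, e2, e3] at tel
  linarith

section
variable {p : ℕ} (hp : p.Prime) (hodd : Odd p)
include hp

lemma franel_choose_p1 : ∀ r, r < p → (((p-1).choose r : ℕ) : ZMod p) = (-1)^r := by
  obtain ⟨q, hq⟩ : ∃ q, p = q + 1 := ⟨p - 1, by have := hp.pos; omega⟩
  subst hq
  simp only [Nat.add_sub_cancel]
  intro r
  induction r with
  | zero => simp
  | succ r ih =>
    intro hr
    have pascal : q.choose r + q.choose (r+1) = (q+1).choose (r+1) :=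
      (Nat.choose_succ_succ q r).symm
    have hdvd : (q+1) ∣ (q+1).choose (r+1) := hp.dvd_choose_self (Nat.succ_ne_zero r) hr
    have h0 : (((q+1).choose (r+1) : ℕ) : ZMod (q+1)) = 0 :=
      (ZMod.natCast_eq_zero_iff _ _).mpr hdvd
    have hc := congrArg (Nat.cast : ℕ → ZMod (q+1)) pascal
    push_cast at hc
    rw [ih (by omega), h0] at hc
    have : ((q.choose (r+1) : ℕ) : ZMod (q+1)) = -(-1)^r := by linear_combination hc
    rw [this]; ring

lemma franel_choose_p2 : ∀ r, r < p - 1 →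
    (((p-2).choose r : ℕ) : ZMod p) = (-1)^r * ((r : ZMod p)+1) := by
  have hp2 := hp.two_le
  intro r
  induction r with
  | zero => simp
  | succ r ih =>
    intro hr
    have pascal : (p-2).choose r + (p-2).choose (r+1) = (p-1).choose (r+1) := by
      rw [show p-1 = (p-2)+1 by omega]
      exact (Nat.choose_succ_succ (p-2) r).symm
    have h1 : (((p-1).choose (r+1) : ℕ) : ZMod p) = (-1)^(r+1) :=
      franel_choose_p1 hp (r+1) (by omega)
    have hc := congrArg (Nat.cast : ℕ → ZMod p) pascal
    push_cast at hc
    rw [ih (by omega), h1] at hc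
    have : (((p-2).choose (r+1) : ℕ) : ZMod p) = (-1)^(r+1) - (-1)^r * ((r:ZMod p)+1) := by
      linear_combination hc
    rw [this]; push_cast; ring

include hodd in
lemma franel_p1 : ((franel (p-1) : ℕ) : ZMod p) = 1 := by
  have hcast : ((franel (p-1) : ℕ) : ZMod p)
      = ∑ r ∈ Finset.range (p-1+1), (((p-1).choose r : ℕ) : ZMod p)^3 := by
    unfold franel; push_cast; rfl
  rw [hcast, show p-1+1 = p by have := hp.pos; omega]
  have : ∀ r ∈ Finset.range p, (((p-1).choose r : ℕ) : ZMod p)^3 = (-1)^r := by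
    intro r hr
    rw [franel_choose_p1 hp r (Finset.mem_range.mp hr), ← pow_mul, mul_comm r 3, pow_mul]
    norm_num
  rw [Finset.sum_congr rfl this, neg_one_geom_sum, if_neg (Nat.not_even_iff_odd.mpr hodd)]

end

lemma franel_sumCubes (m : ℕ) :
    ∑ j ∈ Finset.range (2*m), (-1:ℤ)^j * ((j:ℤ)+1)^3 = -(m:ℤ)^2*(4*m+3) := by
  induction m with
  | zero => simp
  | succ m ih =>
    have h2 : (-1:ℤ)^(2*m) = 1 := by rw [pow_mul]; norm_num
    have h3 : (-1:ℤ)^(2*m+1) = -1 := by rw [pow_succ, h2]; norm_num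
    rw [show 2*(m+1) = (2*m+1)+1 by ring, Finset.sum_range_succ, Finset.sum_range_succ, ih,
        h2, h3]
    push_cast
    ring

lemma franel_p2 {p : ℕ} (hp : p.Prime) (hodd : Odd p) :
    (-8 : ZMod p) * ((franel (p-2) : ℕ) : ZMod p) = 2 := by
  obtain ⟨m, hm⟩ : ∃ m, p = 2*m+1 := by
    obtain ⟨m, hm⟩ := hodd; exact ⟨m, by omega⟩
  have hp3 := hp.two_le
  have hcast : ((franel (p-2) : ℕ) : ZMod p)
      = ∑ r ∈ Finset.range (p-2+1), (((p-2).choose r : ℕ) : ZMod p)^3 := by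
    unfold franel; push_cast; rfl
  have hr1 : p - 2 + 1 = 2*m := by omega
  have hterm : ∀ r ∈ Finset.range (2*m),
      (((p-2).choose r : ℕ) : ZMod p)^3 = (-1)^r * ((r : ZMod p)+1)^3 := by
    intro r hr
    rw [franel_choose_p2 hp r (by have := Finset.mem_range.mp hr; omega), mul_pow,
        ← pow_mul, mul_comm r 3, pow_mul]
    norm_num
  have hsum := congrArg (Int.cast : ℤ → ZMod p) (franel_sumCubes m)
  push_cast at hsum
  have hp0 : (2 : ZMod p) * (m : ZMod p) + 1 = 0 := by
    have h0 : ((2*m+1 : ℕ) : ZMod p) = 0 := by rw [← hm]; exact ZMod.natCast_self p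
    push_cast at h0
    linear_combination h0
  rw [hcast, hr1, Finset.sum_congr rfl hterm, hsum]
  linear_combination (16*(m:ZMod p)^2 + 4*(m:ZMod p) - 2) * hp0

lemma franel_main {p : ℕ} (hp : p.Prime) (hodd : Odd p) :
    ∀ n, n ≤ p - 1 → ((franel n : ℕ) : ZMod p) = (-8)^n * ((franel (p-1-n) : ℕ) : ZMod p) := by
  haveI : Fact p.Prime := ⟨hp⟩
  intro n
  induction n using Nat.strong_induction_on with
  | _ n ih =>
    rcases n with _ | _ | n
    · intro _
      simpa [franel] using (franel_p1 hp hodd).symm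
    · intro h1
      have h2 := franel_p2 hp hodd
      have hf1 : franel 1 = 2 := by simp [franel, Finset.sum_range_succ]
      rw [hf1, show p-1-1 = p-2 by omega, pow_one]
      push_cast
      linear_combination -h2
    · intro hn
      have hp3 : n + 3 ≤ p := by omega
      set m := p - 1 - (n+2) with hmdef
      have hIH1 := ih (n+1) (by omega) (by omega)
      have hIH0 := ih n (by omega) (by omega)
      rw [show p-1-(n+1) = m+1 by omega] at hIH1
      rw [show p-1-n = m+2 by omega] at hIH0
      have hcn := congrArg (Int.cast : ℤ → ZMod p) (franel_cusick n)
      have hcm := congrArg (Int.cast : ℤ → ZMod p) (franel_cusick m)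
      push_cast at hcn hcm
      have hmz : (m : ZMod p) = -((n:ZMod p)+3) := by
        have h0 : ((m + (n+3) : ℕ) : ZMod p) = 0 := by
          rw [show m+(n+3) = p by omega]; exact ZMod.natCast_self p
        push_cast at h0
        linear_combination h0
      rw [hmz] at hcm
      have hne : ((n : ZMod p)+2) ≠ 0 := by
        have h0 : (((n+2 : ℕ)) : ZMod p) ≠ 0 := by
          rw [Ne, ZMod.natCast_eq_zero_iff]
          intro hdvd
          have := Nat.le_of_dvd (by omega) hdvd
          omega
        push_cast at h0
        exact h0
      apply mul_left_cancel₀ (pow_ne_zero 2 hne)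
      rw [hcn, hIH1, hIH0]
      linear_combination (8 * (-8:ZMod p)^n) * hcm

/-- For an odd prime `p` and `0 ≤ n ≤ p-1`, `f n ≡ (-8)^n f (p-1-n) (mod p)`;
in particular `p ∣ f n ↔ p ∣ f (p-1-n)`. -/
theorem franel_symmetry (p : ℕ) (hp : p.Prime) (hodd : Odd p) :
    ∀ n : ℕ, n ≤ p - 1 →
      (franel n : ℤ) ≡ (-8) ^ n * (franel (p - 1 - n) : ℤ) [ZMOD p] ∧
        (p ∣ franel n ↔ p ∣ franel (p - 1 - n)) := by
  haveI : Fact p.Prime := ⟨hp⟩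
  intro n hn
  have key := franel_main hp hodd n hn
  constructor
  · rw [← ZMod.intCast_eq_intCast_iff]
    push_cast
    exact key
  · have h8 : ((-8 : ZMod p))^n ≠ 0 := by
      apply pow_ne_zero
      intro h0
      have h8' : ((8:ℕ) : ZMod p) = 0 := by push_cast; linear_combination -h0
      rw [ZMod.natCast_eq_zero_iff, show (8:ℕ) = 2^3 by norm_num] at h8'
      have hp2 : p = 2 :=
        (Nat.prime_dvd_prime_iff_eq hp Nat.prime_two).mp (hp.dvd_of_dvd_pow h8')
      rw [hp2] at hodd
      exact (by decide : ¬ Odd 2) hodd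
    constructor
    · intro hdvd
      have h0 : ((franel n : ℕ) : ZMod p) = 0 := (ZMod.natCast_eq_zero_iff _ _).mpr hdvd
      rw [key] at h0
      rcases mul_eq_zero.mp h0 with h | h
      · exact absurd h h8
      · exact (ZMod.natCast_eq_zero_iff _ _).mp h
    · intro hdvd
      have h0 : ((franel (p-1-n) : ℕ) : ZMod p) = 0 :=
        (ZMod.natCast_eq_zero_iff _ _).mpr hdvd
      apply (ZMod.natCast_eq_zero_iff _ _).mp
      rw [key, h0, mul_zero]
end

section
/- For any prime p and 0 ≤ n ≤ p-1, the Apéry-like numbers a_n = ∑_{k=0}^n C(n,k)^2 C(n+k,k) satisfy a_n ≡ (-1)^n a_{p-1-n} (mod p). -/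
open Finset

/-- The Apéry-like numbers `a n = ∑_{k=0}^n C(n,k)^2 C(n+k,k)`. -/
def aperyLike (n : ℕ) : ℕ := ∑ k ∈ Finset.range (n + 1), (n.choose k) ^ 2 * ((n + k).choose k)

lemma V1 (n k : ℕ) : ((n+k).choose k) = ∑ i ∈ range (n+1), n.choose i * k.choose i := by
  rw [← Nat.choose_symm_add, Nat.add_choose_eq,
    Finset.Nat.sum_antidiagonal_eq_sum_range_succ_mk, ← Finset.sum_range_reflect]
  refine Finset.sum_congr rfl fun i hi => ?_
  simp only [Finset.mem_range] at hi
  simp only []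
  rw [show n.succ - 1 - i = n - i by omega, Nat.choose_symm (by omega : i ≤ n), Nat.sub_sub_self (by omega : i ≤ n)]

lemma E4 (m i s : ℕ) : m.choose i * (m-i).choose s = m.choose (i+s) * (i+s).choose i := by
  rcases le_or_gt (i+s) m with h|h
  · have := Nat.choose_mul (n := m) (k := i+s) (s := i) (Nat.le_add_right i s)
    simpa using this.symm
  · rcases le_or_gt i m with h2|h2
    · rw [Nat.choose_eq_zero_of_lt (show m - i < s by omega),
        Nat.choose_eq_zero_of_lt h, Nat.mul_zero, Nat.zero_mul]
    · rw [Nat.choose_eq_zero_of_lt h2, Nat.choose_eq_zero_of_lt h, Nat.zero_mul, Nat.zero_mul]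

lemma E3 (k i j : ℕ) : k.choose i * k.choose j
    = ∑ t ∈ range (j+1), i.choose t * ((i + j - t).choose i * k.choose (i+j-t)) := by
  rcases le_or_gt i k with h|h
  · conv_lhs => rw [show k = i + (k - i) by omega]
    rw [show (i + (k-i)).choose i = k.choose i by rw [Nat.add_sub_cancel' h],
      Nat.add_choose_eq, Finset.Nat.sum_antidiagonal_eq_sum_range_succ_mk, Finset.mul_sum]
    refine Finset.sum_congr rfl fun t ht => ?_
    simp only [Finset.mem_range] at ht
    have h4 : k.choose i * (k-i).choose (j - t) = k.choose (i+(j-t)) * (i+(j-t)).choose i := E4 k i (j-t)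
    have he : i + (j - t) = i + j - t := by omega
    rw [he] at h4
    rw [Nat.mul_left_comm, h4]; ring
  · have hz : k.choose i = 0 := Nat.choose_eq_zero_of_lt h
    rw [hz, Nat.zero_mul]
    refine (Finset.sum_eq_zero fun t ht => ?_).symm
    simp only [Finset.mem_range] at ht
    rw [Nat.choose_eq_zero_of_lt (show k < i + j - t by omega), Nat.mul_zero, Nat.mul_zero]

lemma altsum (m : ℕ) : ∑ i ∈ range (m+1), (-1:ℤ)^(m-i) * (m.choose i)
    = if m = 0 then 1 else 0 := by
  rw [← Finset.sum_range_reflect, ← Int.alternating_sum_range_choose (n := m)]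
  refine Finset.sum_congr rfl fun i hi => ?_
  simp only [Finset.mem_range] at hi
  rw [show m + 1 - 1 - i = m - i by omega, show m - (m - i) = i by omega,
    Nat.choose_symm (by omega : i ≤ m)]

lemma E5 (n s : ℕ) : ∑ k ∈ range (n+1), (-1:ℤ)^(n-k) * (n.choose k) * (k.choose s)
    = if s = n then 1 else 0 := by
  rcases le_or_gt s n with hs|hs
  · rw [Finset.range_eq_Ico, ← Finset.sum_Ico_consecutive _ (Nat.zero_le s) (by omega : s ≤ n+1)]
    have h1 : ∑ k ∈ Finset.Ico 0 s, (-1:ℤ)^(n-k) * (n.choose k) * (k.choose s) = 0 := by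
      refine Finset.sum_eq_zero fun k hk => ?_
      simp only [Finset.mem_Ico] at hk
      rw [Nat.choose_eq_zero_of_lt hk.2]; simp
    rw [h1, zero_add, Finset.sum_Ico_eq_sum_range]
    have h2 : ∀ i ∈ range (n + 1 - s), (-1:ℤ)^(n-(s+i)) * (n.choose (s+i)) * ((s+i).choose s)
        = (n.choose s : ℤ) * ((-1:ℤ)^((n-s)-i) * ((n-s).choose i)) := by
      intro i hi
      simp only [Finset.mem_range] at hi
      have := Nat.choose_mul (n := n) (k := s+i) (s := s) (Nat.le_add_right s i)
      have hc : (n.choose (s+i) : ℤ) * ((s+i).choose s) = (n.choose s : ℤ) * ((n-s).choose i) := by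
        simp at this; exact_mod_cast congrArg (Nat.cast (R := ℤ)) this
      have he : n - (s+i) = (n-s) - i := by omega
      rw [he]; rw [mul_assoc, hc]; ring
    rw [Finset.sum_congr rfl h2, ← Finset.mul_sum,
      show n + 1 - s = (n - s) + 1 by omega, altsum]
    rcases eq_or_lt_of_le hs with h|h
    · simp [h, Nat.sub_self]
    · rw [if_neg (by omega), if_neg (by omega), mul_zero]
  · rw [if_neg (by omega)]
    refine Finset.sum_eq_zero fun k hk => ?_
    simp only [Finset.mem_range] at hk
    rw [Nat.choose_eq_zero_of_lt (show k < s by omega)]; simp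

lemma Slem (n i j : ℕ) (hi : i ≤ n) (hj : j ≤ n) :
    ∑ k ∈ range (n+1), (-1:ℤ)^(n-k) * (n.choose k) * ((k.choose i) * (k.choose j))
    = if n ≤ i + j then (i.choose (i+j-n) : ℤ) * (n.choose i) else 0 := by
  have step1 : ∀ k : ℕ, ((k.choose i : ℤ) * (k.choose j))
      = ∑ t ∈ range (j+1), (i.choose t : ℤ) * ((i+j-t).choose i) * (k.choose (i+j-t)) := by
    intro k
    have h : ((k.choose i * k.choose j : ℕ) : ℤ)
        = ((∑ t ∈ range (j+1), i.choose t * ((i + j - t).choose i * k.choose (i+j-t)) : ℕ) : ℤ) :=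
      congrArg (fun x : ℕ => (x:ℤ)) (E3 k i j)
    push_cast at h
    rw [h]
    exact Finset.sum_congr rfl fun t _ => by ring
  calc ∑ k ∈ range (n+1), (-1:ℤ)^(n-k) * (n.choose k) * ((k.choose i) * (k.choose j))
      = ∑ k ∈ range (n+1), ∑ t ∈ range (j+1),
          ((i.choose t : ℤ) * ((i+j-t).choose i)) * ((-1:ℤ)^(n-k) * (n.choose k) * (k.choose (i+j-t))) := by
        refine Finset.sum_congr rfl fun k _ => ?_
        rw [step1 k, Finset.mul_sum]
        exact Finset.sum_congr rfl fun t _ => by ring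
    _ = ∑ t ∈ range (j+1), ((i.choose t : ℤ) * ((i+j-t).choose i))
          * ∑ k ∈ range (n+1), (-1:ℤ)^(n-k) * (n.choose k) * (k.choose (i+j-t)) := by
        rw [Finset.sum_comm]
        exact Finset.sum_congr rfl fun t _ => by rw [Finset.mul_sum]
    _ = ∑ t ∈ range (j+1), ((i.choose t : ℤ) * ((i+j-t).choose i))
          * (if i+j-t = n then 1 else 0) := by
        exact Finset.sum_congr rfl fun t _ => by rw [E5]
    _ = if n ≤ i + j then (i.choose (i+j-n) : ℤ) * (n.choose i) else 0 := by
        rcases le_or_gt n (i+j) with h|h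
        · rw [if_pos h, Finset.sum_eq_single (i+j-n)]
          · rw [if_pos (by omega), show i+j-(i+j-n) = n by omega, mul_one]
          · intro b hb hne
            simp only [Finset.mem_range] at hb
            rw [if_neg (by omega), mul_zero]
          · intro habs
            exact absurd (Finset.mem_range.2 (by omega)) habs
        · rw [if_neg (by omega)]
          refine Finset.sum_eq_zero fun t ht => ?_
          simp only [Finset.mem_range] at ht
          rw [if_neg (by omega), mul_zero]

lemma apery_eq_double (n : ℕ) : (aperyLike n : ℤ)
    = ∑ a ∈ range (n+1), ∑ b ∈ range (n+1),
        ((n.choose a : ℤ))^2 * (n.choose b) * ((n-a).choose b) := by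
  unfold aperyLike
  push_cast
  rw [← Finset.sum_range_reflect]
  refine Finset.sum_congr rfl fun a ha => ?_
  simp only [Finset.mem_range] at ha
  rw [show n + 1 - 1 - a = n - a by omega, Nat.choose_symm (by omega : a ≤ n),
    V1 n (n - a)]
  push_cast
  rw [Finset.mul_sum]
  exact Finset.sum_congr rfl fun b _ => by ring

lemma alt_eq_double (n : ℕ) :
    ∑ k ∈ range (n+1), (-1:ℤ)^(n-k) * (n.choose k) * ((n+k).choose k)^2
    = ∑ a ∈ range (n+1), ∑ b ∈ range (n+1),
        ((n.choose a : ℤ))^2 * (n.choose b) * ((n-a).choose b) := by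
  have hv : ∀ k : ℕ, (((n+k).choose k : ℤ)) = ∑ i ∈ range (n+1), (n.choose i : ℤ) * (k.choose i) := by
    intro k
    have h := congrArg (fun x : ℕ => (x:ℤ)) (V1 n k)
    push_cast at h
    exact h
  calc ∑ k ∈ range (n+1), (-1:ℤ)^(n-k) * (n.choose k) * ((n+k).choose k)^2
      = ∑ k ∈ range (n+1), ∑ i ∈ range (n+1), ∑ j ∈ range (n+1),
          ((n.choose i : ℤ) * (n.choose j)) * ((-1:ℤ)^(n-k) * (n.choose k) * ((k.choose i) * (k.choose j))) := by
        refine Finset.sum_congr rfl fun k _ => ?_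
        rw [hv k, sq, Finset.sum_mul_sum, Finset.mul_sum]
        refine Finset.sum_congr rfl fun i _ => ?_
        rw [Finset.mul_sum]
        exact Finset.sum_congr rfl fun j _ => by ring
    _ = ∑ i ∈ range (n+1), ∑ j ∈ range (n+1), ((n.choose i : ℤ) * (n.choose j)) *
          ∑ k ∈ range (n+1), (-1:ℤ)^(n-k) * (n.choose k) * ((k.choose i) * (k.choose j)) := by
        rw [Finset.sum_comm]
        refine Finset.sum_congr rfl fun i _ => ?_
        rw [Finset.sum_comm]
        exact Finset.sum_congr rfl fun j _ => by rw [Finset.mul_sum]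
    _ = ∑ i ∈ range (n+1), ∑ j ∈ range (n+1), ((n.choose i : ℤ) * (n.choose j)) *
          (if n ≤ i + j then (i.choose (i+j-n) : ℤ) * (n.choose i) else 0) := by
        refine Finset.sum_congr rfl fun i hi => Finset.sum_congr rfl fun j hj => ?_
        simp only [Finset.mem_range] at hi hj
        rw [Slem n i j (by omega) (by omega)]
    _ = ∑ a ∈ range (n+1), ∑ b ∈ range (n+1),
          ((n.choose a : ℤ))^2 * (n.choose b) * ((n-a).choose b) := by
        rw [← Finset.sum_range_reflect]
        refine Finset.sum_congr rfl fun a ha => ?_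
        rw [← Finset.sum_range_reflect]
        refine Finset.sum_congr rfl fun b hb => ?_
        simp only [Finset.mem_range] at ha hb
        rw [show n + 1 - 1 - a = n - a by omega, show n + 1 - 1 - b = n - b by omega,
          Nat.choose_symm (by omega : a ≤ n), Nat.choose_symm (by omega : b ≤ n)]
        rcases le_or_gt (a + b) n with h|h
        · rw [if_pos (by omega), show (n-a) + (n-b) - n = (n-a) - b by omega,
            Nat.choose_symm (by omega : b ≤ n - a)]
          ring
        · rw [if_neg (by omega), mul_zero,
            Nat.choose_eq_zero_of_lt (show n - a < b by omega)]
          push_cast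
          ring

lemma IDENT (n : ℕ) : (aperyLike n : ℤ)
    = ∑ k ∈ range (n+1), (-1:ℤ)^(n-k) * (n.choose k) * ((n+k).choose k)^2 := by
  rw [apery_eq_double, alt_eq_double]

section ModP
variable {p : ℕ} (hp : p.Prime)

lemma cast_ne_zero_of_lt {k : ℕ} (hk0 : 0 < k) (hkp : k < p) : (k : ZMod p) ≠ 0 := by
  rw [Ne, ZMod.natCast_eq_zero_iff]
  intro hd
  exact absurd (Nat.le_of_dvd hk0 hd) (by omega)

lemma choose_succ_right_zmod (n k : ℕ) :
    ((k:ZMod p) + 1) * (n.choose (k+1)) = (n.choose k) * ((n : ZMod p) - k) := by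
  rcases le_or_gt k n with h|h
  · have := congrArg (fun x : ℕ => (x : ZMod p)) (Nat.choose_succ_right_eq n k)
    push_cast [Nat.cast_sub h] at this
    rw [mul_comm]
    rw [this]
  · rw [Nat.choose_eq_zero_of_lt h, Nat.choose_eq_zero_of_lt (by omega)]
    push_cast
    ring

include hp in
/-- `C(p-1-n+k, k) ≡ (-1)^k C(n,k) [MOD p]` for `k ≤ p-1-n`. -/
lemma L2 (n : ℕ) (hn : n ≤ p - 1) :
    ∀ k ≤ p - 1 - n, (((p-1-n+k).choose k : ZMod p)) = (-1)^k * (n.choose k) := by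
  haveI : Fact p.Prime := ⟨hp⟩
  have hp2 : 2 ≤ p := hp.two_le
  set m := p - 1 - n with hm
  intro k
  induction k with
  | zero => simp
  | succ k ih =>
    intro hk1
    have ih' := ih (by omega)
    have h1 := congrArg (fun x : ℕ => (x : ZMod p)) (Nat.add_one_mul_choose_eq (m+k) k)
    push_cast at h1
    -- h1 : (m+k+1) * C(m+k,k) = C(m+k+1, k+1) * (k+1)
    have hmk : ((m:ZMod p) + k + 1) = (k : ZMod p) - n := by
      have : ((m + k + 1 + n : ℕ) : ZMod p) = ((p + k : ℕ) : ZMod p) := by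
        congr 1; omega
      push_cast [ZMod.natCast_self] at this
      linear_combination this
    rw [hmk] at h1
    have h2 := choose_succ_right_zmod (p := p) n k
    have hne : ((k:ZMod p) + 1) ≠ 0 := by
      have : (((k+1 : ℕ)) : ZMod p) ≠ 0 := cast_ne_zero_of_lt (by omega) (by omega)
      push_cast at this
      exact this
    apply mul_right_cancel₀ hne
    rw [show m + (k+1) = m + k + 1 by ring]
    linear_combination -h1 + ((k:ZMod p) - n) * ih' + (-1:ZMod p)^k * h2

include hp in
/-- `C(p-1-n, k) ≡ (-1)^k C(n+k,k) [MOD p]` for `k ≤ p-1-n`. -/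
lemma L1 (n : ℕ) (hn : n ≤ p - 1) :
    ∀ k ≤ p - 1 - n, (((p-1-n).choose k : ZMod p)) = (-1)^k * ((n+k).choose k) := by
  haveI : Fact p.Prime := ⟨hp⟩
  have hp2 : 2 ≤ p := hp.two_le
  set m := p - 1 - n with hm
  intro k
  induction k with
  | zero => simp
  | succ k ih =>
    intro hk1
    have ih' := ih (by omega)
    have h1 := choose_succ_right_zmod (p := p) m k
    -- (k+1) * C(m,k+1) = C(m,k) * ((m:ZMod p) - k)
    have hmc : ((m:ZMod p) - k) = -((n:ZMod p) + k + 1) := by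
      have : ((m + n + 1 : ℕ) : ZMod p) = ((p : ℕ) : ZMod p) := by congr 1; omega
      push_cast [ZMod.natCast_self] at this
      linear_combination this
    have h2 := congrArg (fun x : ℕ => (x : ZMod p)) (Nat.add_one_mul_choose_eq (n+k) k)
    push_cast at h2
    -- h2 : (n+k+1) * C(n+k,k) = C(n+k+1,k+1) * (k+1)
    have hne : ((k:ZMod p) + 1) ≠ 0 := by
      have : (((k+1 : ℕ)) : ZMod p) ≠ 0 := cast_ne_zero_of_lt (by omega) (by omega)
      push_cast at this
      exact this
    apply mul_left_cancel₀ hne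
    rw [h1, ih', hmc, show (n:ℕ) + (k+1) = n + k + 1 by ring]
    linear_combination (-1:ZMod p)^(k+1) * h2

end ModP

/-- For any prime `p` and `0 ≤ n ≤ p-1`, `a n ≡ (-1)^n a (p-1-n) (mod p)`. -/
theorem aperyLike_symmetry (p : ℕ) (hp : p.Prime) :
    ∀ n : ℕ, n ≤ p - 1 →
      (aperyLike n : ℤ) ≡ (-1) ^ n * (aperyLike (p - 1 - n) : ℤ) [ZMOD p] := by
  intro n hn
  haveI : Fact p.Prime := ⟨hp⟩
  have hp2 : 2 ≤ p := hp.two_le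
  rw [← ZMod.intCast_eq_intCast_iff]
  push_cast
  set m := p - 1 - n with hm
  have hmle : m ≤ p - 1 := by omega
  -- A : aperyLike n in ZMod p
  have hA : ((aperyLike n : ℕ) : ZMod p)
      = ∑ k ∈ range (n+1), (-1:ZMod p)^(n-k) * (n.choose k) * (((n+k).choose k))^2 := by
    have h := congrArg (fun x : ℤ => (x : ZMod p)) (IDENT n)
    push_cast at h
    exact h
  -- B : aperyLike m in ZMod p
  have hB : ((aperyLike m : ℕ) : ZMod p)
      = ∑ k ∈ range (m+1), (-1:ZMod p)^k * (n.choose k) * (((n+k).choose k))^2 := by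
    unfold aperyLike
    push_cast
    refine Finset.sum_congr rfl fun k hk => ?_
    simp only [Finset.mem_range] at hk
    rw [L1 hp n hn k (by omega), L2 hp n hn k (by omega), mul_pow,
      show ((-1:ZMod p)^k)^2 = 1 by rw [← pow_mul, mul_comm k 2, pow_mul, neg_one_sq, one_pow]]
    ring
  -- bridge
  have hC : ∑ k ∈ range (m+1), (-1:ZMod p)^k * (n.choose k) * (((n+k).choose k))^2
      = ∑ k ∈ range (n+1), (-1:ZMod p)^k * (n.choose k) * (((n+k).choose k))^2 := by
    rcases le_total n m with h|h
    · refine (Finset.sum_subset (Finset.range_subset_range.2 (by omega)) fun k hk hk2 => ?_).symm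
      simp only [Finset.mem_range] at hk hk2
      rw [Nat.choose_eq_zero_of_lt (show n < k by omega)]
      push_cast
      ring
    · refine Finset.sum_subset (Finset.range_subset_range.2 (by omega)) fun k hk hk2 => ?_
      simp only [Finset.mem_range] at hk hk2
      have hdvd : p ∣ (n+k).choose k :=
        hp.dvd_choose (by omega) (by omega) (by omega)
      rw [(ZMod.natCast_eq_zero_iff _ _).2 hdvd]
      ring
  rw [hA, hB, hC, Finset.mul_sum]
  refine Finset.sum_congr rfl fun k hk => ?_
  simp only [Finset.mem_range] at hk
  have e1 : (-1:ZMod p)^n = (-1:ZMod p)^(n-k) * (-1:ZMod p)^k := by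
    rw [← pow_add, show n - k + k = n by omega]
  rw [e1]
  have e2 : ((-1:ZMod p)^k) * ((-1:ZMod p)^k) = 1 := by
    rw [← pow_add, ← two_mul, pow_mul, neg_one_sq, one_pow]
  linear_combination (-(-1:ZMod p)^(n-k) * (n.choose k) * (((n+k).choose k):ZMod p)^2) * e2
end

section
/- For any prime p > 3 and 0 ≤ n ≤ p-1, the numbers b_n = ∑_{k=0}^n C(n,k)^2 C(2k,k) satisfy b_n ≡ (-3 | p) · 9^n · b_{p-1-n} (mod p), where (-3 | p) is the Legendre symbol. -/
/-- The numbers `b n = ∑_{k=0}^n C(n,k)^2 C(2k,k)`. -/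
def bSeq (n : ℕ) : ℕ := ∑ k ∈ Finset.range (n + 1), (n.choose k) ^ 2 * ((2 * k).choose k)

open Finset

section WZ

def Gc (n k : ℕ) : ℤ :=
  -(k : ℤ) * (4 * n + 4 - 3 * k) * (n.choose (k - 1) : ℤ) ^ 2 * ((2 * k).choose k : ℤ)

lemma cb_rec (k : ℕ) :
    ((k : ℤ) + 1) * ((2 * (k+1)).choose (k+1) : ℤ) = 2 * (2 * k + 1) * ((2 * k).choose k : ℤ) := by
  have h := Nat.succ_mul_centralBinom_succ k
  simp only [Nat.centralBinom] at h
  exact_mod_cast congrArg (Nat.cast : ℕ → ℤ) h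

lemma choose_rel2 (n j : ℕ) :
    ((j : ℤ) + 1) * (n.choose (j+1) : ℤ) = ((n : ℤ) - j) * (n.choose j : ℤ) := by
  have h := Nat.choose_succ_right_eq n j
  by_cases hjn : j ≤ n
  · have hcast := congrArg (Nat.cast : ℕ → ℤ) h
    push_cast [hjn] at hcast
    linarith [hcast]
  · have h2 : n.choose j = 0 := Nat.choose_eq_zero_of_lt (by omega)
    have h3 : n.choose (j+1) = 0 := Nat.choose_eq_zero_of_lt (by omega)
    rw [h2, h3]; push_cast; ring

lemma choose_rel3 (n k : ℕ) (hn : 1 ≤ n) :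
    (n : ℤ) * ((n-1).choose k : ℤ) = ((n : ℤ) - k) * (n.choose k : ℤ) := by
  obtain ⟨j, rfl⟩ := Nat.exists_eq_add_of_le hn
  have h1 : (1 + j) - 1 = j := by omega
  rw [h1]
  have hnat : (j + 1) * j.choose k = (j+1).choose k * (j + 1 - k) := by
    rw [Nat.add_one_mul_choose_eq, Nat.choose_succ_right_eq]
  have hj2 : ((1:ℕ) + j : ℕ) = (j + 1 : ℕ) := by omega
  rw [hj2]
  by_cases hk : k ≤ j + 1
  · have hcast := congrArg (Nat.cast : ℕ → ℤ) hnat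
    push_cast [hk] at hcast
    push_cast
    linarith [hcast]
  · have h2 : j.choose k = 0 := Nat.choose_eq_zero_of_lt (by omega)
    have h3 : (j+1).choose k = 0 := Nat.choose_eq_zero_of_lt (by omega)
    rw [h2, h3]; push_cast; ring

lemma perk (n k : ℕ) (hn : 1 ≤ n) :
    ((n:ℤ)+1)^2 * ((n+1).choose k : ℤ)^2 * ((2*k).choose k : ℤ)
      + 9*(n:ℤ)^2 * ((n-1).choose k : ℤ)^2 * ((2*k).choose k : ℤ)
      - (10*(n:ℤ)^2+10*(n:ℤ)+3) * (n.choose k : ℤ)^2 * ((2*k).choose k : ℤ)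
    = Gc n (k+1) - Gc n k := by
  rcases k with _ | j
  · simp only [Gc, Nat.choose_zero_right, Nat.mul_zero, Nat.choose_self]
    norm_num
    ring_nf
  · -- k = j+1
    have hpascal : ((n+1).choose (j+1) : ℤ) = (n.choose (j+1) : ℤ) + (n.choose j : ℤ) := by
      have h := Nat.choose_succ_succ n j
      push_cast [h]; ring
    have h2 : ((j:ℤ) + 1) * (n.choose (j+1) : ℤ) = ((n : ℤ) - j) * (n.choose j : ℤ) :=
      choose_rel2 n j
    have h3 := cb_rec (j+1)
    have h1 := choose_rel3 n (j+1) hn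
    simp only [Gc, Nat.add_sub_cancel]
    rw [hpascal]
    have hmul : (((j:ℤ)+1)^2 * ((j:ℤ)+2)) ≠ 0 := by positivity
    apply mul_left_cancel₀ hmul
    push_cast at h1 h2 h3 ⊢
    linear_combination (norm := ring1)
      (9*((2*(j+1)).choose (j+1) : ℤ)*((j:ℤ)+1)^2*((j:ℤ)+2)*((n:ℤ)*(((n-1)).choose (j+1) : ℤ)+((n:ℤ)-((j:ℤ)+1))*(n.choose (j+1) : ℤ))) * h1
      + (((j:ℤ)+1)^2*((j:ℤ)+2)*(4*(n:ℤ)+1-3*((j:ℤ)+1))*(n.choose (j+1) : ℤ)^2) * h3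
      + (((j:ℤ)+1)*((j:ℤ)+2)*((2*(j+1)).choose (j+1) : ℤ)*(-(2*(n:ℤ)+3*((j:ℤ)+1)+2)*(((j:ℤ)+1)*(n.choose (j+1) : ℤ)+((n:ℤ)+1-((j:ℤ)+1))*(n.choose j : ℤ))+2*((n:ℤ)+1)^2*(n.choose j : ℤ))) * h2

lemma cast_b (m : ℕ) :
    (bSeq m : ℤ) = ∑ k ∈ range (m+1), (m.choose k : ℤ)^2 * ((2*k).choose k : ℤ) := by
  unfold bSeq
  push_cast
  rfl

lemma bRec (n : ℕ) (hn : 1 ≤ n) :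
    ((n:ℤ)+1)^2 * (bSeq (n+1) : ℤ) + 9*(n:ℤ)^2 * (bSeq (n-1) : ℤ)
      = (10*(n:ℤ)^2+10*(n:ℤ)+3) * (bSeq n : ℤ) := by
  have key : ∑ k ∈ range (n+2),
      (((n:ℤ)+1)^2 * ((n+1).choose k : ℤ)^2 * ((2*k).choose k : ℤ)
      + 9*(n:ℤ)^2 * ((n-1).choose k : ℤ)^2 * ((2*k).choose k : ℤ)
      - (10*(n:ℤ)^2+10*(n:ℤ)+3) * (n.choose k : ℤ)^2 * ((2*k).choose k : ℤ)) = 0 := by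
    rw [Finset.sum_congr rfl fun k _ => perk n k hn, Finset.sum_range_sub]
    have h1 : Gc n (n+2) = 0 := by
      have : n.choose (n+2-1) = 0 := Nat.choose_eq_zero_of_lt (by omega)
      simp [Gc, this]
    have h2 : Gc n 0 = 0 := by simp [Gc]
    rw [h1, h2, sub_zero]
  have hb1 : (bSeq n : ℤ) = ∑ k ∈ range (n+2), (n.choose k : ℤ)^2 * ((2*k).choose k : ℤ) := by
    rw [cast_b, Finset.sum_range_succ (n := n+1)]
    have : n.choose (n+1) = 0 := Nat.choose_eq_zero_of_lt (by omega)
    simp [this]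
  have hb2 : (bSeq (n-1) : ℤ)
      = ∑ k ∈ range (n+2), ((n-1).choose k : ℤ)^2 * ((2*k).choose k : ℤ) := by
    rw [cast_b]
    rw [show (n-1)+1 = n by omega]
    rw [Finset.sum_range_succ (n := n+1), Finset.sum_range_succ (n := n)]
    have e1 : (n-1).choose n = 0 := Nat.choose_eq_zero_of_lt (by omega)
    have e2 : (n-1).choose (n+1) = 0 := Nat.choose_eq_zero_of_lt (by omega)
    simp [e1, e2]
  have hb3 := cast_b (n+1)
  rw [hb1, hb2, hb3]
  have comb : ((n:ℤ)+1)^2 * (∑ k ∈ range (n+2), ((n+1).choose k : ℤ)^2 * ((2*k).choose k : ℤ))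
      + 9*(n:ℤ)^2 * (∑ k ∈ range (n+2), ((n-1).choose k : ℤ)^2 * ((2*k).choose k : ℤ))
      - (10*(n:ℤ)^2+10*(n:ℤ)+3) * (∑ k ∈ range (n+2), (n.choose k : ℤ)^2 * ((2*k).choose k : ℤ))
      = ∑ k ∈ range (n+2),
      (((n:ℤ)+1)^2 * ((n+1).choose k : ℤ)^2 * ((2*k).choose k : ℤ)
      + 9*(n:ℤ)^2 * ((n-1).choose k : ℤ)^2 * ((2*k).choose k : ℤ)
      - (10*(n:ℤ)^2+10*(n:ℤ)+3) * (n.choose k : ℤ)^2 * ((2*k).choose k : ℤ)) := by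
    rw [Finset.mul_sum, Finset.mul_sum, Finset.mul_sum, ← Finset.sum_add_distrib,
      ← Finset.sum_sub_distrib]
    exact Finset.sum_congr rfl fun k _ => by ring
  rw [show n + 1 + 1 = n + 2 from rfl] at *
  linarith [key, comb]

end WZ

section ModP

lemma N1 (k : ℕ) : (2*k).choose k * k.factorial = 2^k * ∏ i ∈ range k, (2*i+1) := by
  induction k with
  | zero => simp
  | succ k ih =>
    have h := Nat.succ_mul_centralBinom_succ k
    simp only [Nat.centralBinom] at h
    have : (2*(k+1)).choose (k+1) * (k+1).factorial
        = ((k+1) * (2*(k+1)).choose (k+1)) * k.factorial := by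
      rw [Nat.factorial_succ]; ring
    rw [this, h, Finset.prod_range_succ]
    rw [show 2 * (2*k+1) * (2*k).choose k * k.factorial
        = 2 * (2*k+1) * ((2*k).choose k * k.factorial) by ring, ih]
    ring

variable {p : ℕ} [Fact p.Prime]

lemma two_m_nat (hp3 : 3 < p) : 2 * (p / 2) = p - 1 := by
  have hp := Fact.out (p := p.Prime)
  have hodd : p % 2 = 1 := Nat.odd_iff.mp (hp.odd_of_ne_two (by omega))
  omega

lemma two_m_cast (hp3 : 3 < p) : (2 * ((p/2 : ℕ) : ZMod p)) = -1 := by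
  have h := two_m_nat hp3
  have h1 : ((2*(p/2) : ℕ) : ZMod p) = ((p-1:ℕ) : ZMod p) := by rw [h]
  have h2 : ((p-1:ℕ) : ZMod p) = -1 := by
    rw [Nat.cast_sub (show 1 ≤ p by omega)]
    simp [ZMod.natCast_self]
  calc 2 * ((p/2:ℕ):ZMod p) = ((2*(p/2):ℕ) : ZMod p) := by push_cast; ring
    _ = -1 := by rw [h1, h2]

lemma N2 (hp3 : 3 < p) (k : ℕ) (hk : k ≤ p / 2) :
    ((p/2).choose k : ZMod p) * (k.factorial : ZMod p) * (-2)^k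
      = ∏ i ∈ range k, ((2*i+1 : ℕ) : ZMod p) := by
  induction k with
  | zero => simp
  | succ k ih =>
    have hk' : k ≤ p / 2 := by omega
    have ih' := ih hk'
    have hrel : ((p/2).choose (k+1) : ℕ) * (k+1) = (p/2).choose k * (p/2 - k) :=
      Nat.choose_succ_right_eq (p/2) k
    have hcast : ((p/2).choose (k+1) : ZMod p) * ((k:ZMod p)+1)
        = ((p/2).choose k : ZMod p) * (((p/2 : ℕ) : ZMod p) - (k : ZMod p)) := by
      have h2 : ((p/2 - k : ℕ) : ZMod p) = ((p/2 : ℕ) : ZMod p) - (k : ZMod p) := by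
        push_cast [Nat.cast_sub hk']; ring
      have := congrArg (Nat.cast : ℕ → ZMod p) hrel
      push_cast at this
      rw [← h2]
      exact_mod_cast this
    rw [Finset.prod_range_succ, ← ih']
    have hfac : ((k+1).factorial : ZMod p) = ((k:ZMod p)+1) * (k.factorial : ZMod p) := by
      rw [Nat.factorial_succ]; push_cast; ring
    rw [hfac]
    have hm := two_m_cast hp3
    have h21 : ((2*k+1 : ℕ) : ZMod p) = 2*(k:ZMod p)+1 := by push_cast; ring
    rw [h21]
    calc ((p/2).choose (k+1) : ZMod p) * (((k:ZMod p)+1) * (k.factorial : ZMod p)) * (-2)^(k+1)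
        = (((p/2).choose (k+1) : ZMod p) * ((k:ZMod p)+1)) * (k.factorial : ZMod p) * ((-2)^k * (-2)) := by ring
      _ = (((p/2).choose k : ZMod p) * (((p/2 : ℕ) : ZMod p) - (k : ZMod p))) * (k.factorial : ZMod p) * ((-2)^k * (-2)) := by rw [hcast]
      _ = (((p/2).choose k : ZMod p) * (k.factorial : ZMod p) * (-2)^k) * (-2 * (((p/2 : ℕ) : ZMod p) - (k : ZMod p))) := by ring
      _ = (((p/2).choose k : ZMod p) * (k.factorial : ZMod p) * (-2)^k) * (2*(k:ZMod p)+1) := by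
          rw [show -2 * (((p/2 : ℕ) : ZMod p) - (k : ZMod p)) = -(2 * ((p/2 : ℕ) : ZMod p)) + 2*(k:ZMod p) by ring, hm]; ring

lemma cb_eq (hp3 : 3 < p) (k : ℕ) (hk : k ≤ p - 1) :
    (((2*k).choose k : ℕ) : ZMod p) = (-4)^k * ((p/2).choose k : ZMod p) := by
  have hp := Fact.out (p := p.Prime)
  by_cases hkm : k ≤ p / 2
  · have h1 := congrArg (Nat.cast : ℕ → ZMod p) (N1 k)
    push_cast at h1
    have h2 := N2 hp3 k hkm
    push_cast at h2
    have hfacne : (k.factorial : ZMod p) ≠ 0 := by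
      rw [Ne, ZMod.natCast_eq_zero_iff]
      intro hdvd
      have := (Nat.Prime.dvd_factorial hp).mp hdvd
      omega
    have key : (((2*k).choose k : ℕ) : ZMod p) * (k.factorial : ZMod p)
        = ((-4)^k * ((p/2).choose k : ZMod p)) * (k.factorial : ZMod p) := by
      calc (((2*k).choose k : ℕ) : ZMod p) * (k.factorial : ZMod p)
          = 2^k * ∏ i ∈ range k, (2*(i:ZMod p)+1) := h1
        _ = 2^k * (((p/2).choose k : ZMod p) * (k.factorial : ZMod p) * (-2)^k) := by rw [h2]
        _ = ((-4)^k * ((p/2).choose k : ZMod p)) * (k.factorial : ZMod p) := by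
            rw [show ((-4 : ZMod p))^k = (2:ZMod p)^k * (-2:ZMod p)^k by
              rw [← mul_pow]; norm_num]
            ring
    exact mul_right_cancel₀ hfacne key
  · have hz : (p/2).choose k = 0 := Nat.choose_eq_zero_of_lt (by omega)
    have hdvd : p ∣ (k + k).choose k := by
      refine Nat.Prime.dvd_choose_add hp ?_ ?_ ?_
      · omega
      · omega
      · have := two_m_nat hp3; omega
    rw [hz]
    rw [show 2*k = k + k by ring]
    rw [(ZMod.natCast_eq_zero_iff _ _).mpr hdvd]
    push_cast
    ring

variable {R : Type*} [CommRing R]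

lemma powsum (m : ℕ) (x : R) :
    ∑ k ∈ range (m+1), (m.choose k : R) * x^k = (1+x)^m := by
  rw [add_comm (1:R) x, add_pow]
  exact Finset.sum_congr rfl fun k _ => by rw [one_pow]; ring

lemma sum1 (t : ℕ) (x : R) :
    ∑ k ∈ range (t+2), (k : R) * ((t+1).choose k : R) * x^k = ((t:R)+1)*x*(1+x)^t := by
  rw [Finset.sum_range_succ']
  simp only [Nat.cast_zero, zero_mul, add_zero, pow_zero]
  push_cast
  have hterm : ∀ i : ℕ, ((i:R)+1) * ((t+1).choose (i+1) : R) * x^(i+1)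
      = ((t:R)+1) * x * ((t.choose i : R) * x^i) := by
    intro i
    have h := Nat.add_one_mul_choose_eq t i
    have hc := congrArg (Nat.cast : ℕ → R) h
    push_cast at hc
    calc ((i:R)+1) * ((t+1).choose (i+1) : R) * x^(i+1)
        = (((t+1).choose (i+1) : R) * ((i:R)+1)) * x^(i+1) := by ring
      _ = (((t:R)+1) * (t.choose i : R)) * x^(i+1) := by rw [← hc]
      _ = ((t:R)+1) * x * ((t.choose i : R) * x^i) := by rw [pow_succ]; ring
  calc ∑ i ∈ range (t+1), ((i:R)+1) * ((t+1).choose (i+1) : R) * x^(i+1)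
      = ∑ i ∈ range (t+1), ((t:R)+1) * x * ((t.choose i : R) * x^i) := by
        refine Finset.sum_congr rfl fun i _ => ?_
        rw [← hterm i]
    _ = ((t:R)+1) * x * ∑ i ∈ range (t+1), (t.choose i : R) * x^i := by rw [Finset.mul_sum]
    _ = ((t:R)+1)*x*(1+x)^t := by rw [powsum]

lemma sum2 (t : ℕ) (x : R) :
    ∑ k ∈ range (t+3), (k : R) * ((k:R)-1) * ((t+2).choose k : R) * x^k
      = ((t:R)+2)*((t:R)+1)*x^2*(1+x)^t := by
  rw [Finset.sum_range_succ']
  simp only [Nat.cast_zero, zero_mul, add_zero, pow_zero]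
  push_cast
  have hterm : ∀ i : ℕ, ((i:R)+1) * (((i:R)+1)-1) * ((t+2).choose (i+1) : R) * x^(i+1)
      = ((t:R)+2) * x * ((i:R) * ((t+1).choose i : R) * x^i) := by
    intro i
    have h := Nat.add_one_mul_choose_eq (t+1) i
    have hc := congrArg (Nat.cast : ℕ → R) h
    rw [show t + 1 + 1 = t + 2 by omega] at hc
    push_cast at hc
    calc ((i:R)+1) * (((i:R)+1)-1) * ((t+2).choose (i+1) : R) * x^(i+1)
        = (((t+2).choose (i+1) : R) * ((i:R)+1)) * (i:R) * x^(i+1) := by ring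
      _ = (((t:R)+1+1) * ((t+1).choose i : R)) * (i:R) * x^(i+1) := by
          rw [show ((t:R)+2) = ((t:R)+1+1) by ring] at *
          rw [← hc]
      _ = ((t:R)+2) * x * ((i:R) * ((t+1).choose i : R) * x^i) := by rw [pow_succ]; ring
  calc ∑ i ∈ range (t+2), ((i:R)+1) * (((i:R)+1)-1) * ((t+2).choose (i+1) : R) * x^(i+1)
      = ∑ i ∈ range (t+2), ((t:R)+2) * x * ((i:R) * ((t+1).choose i : R) * x^i) := by
        refine Finset.sum_congr rfl fun i _ => ?_
        rw [← hterm i]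
    _ = ((t:R)+2) * x * ∑ i ∈ range (t+2), (i:R) * ((t+1).choose i : R) * x^i := by
        rw [Finset.mul_sum]
    _ = ((t:R)+2)*((t:R)+1)*x^2*(1+x)^t := by rw [sum1]; ring

variable {p : ℕ} [Fact p.Prime]

lemma choose_pm1 (hp3 : 3 < p) (k : ℕ) (hk : k ≤ p - 1) :
    (((p-1).choose k : ℕ) : ZMod p) = (-1)^k := by
  have hp := Fact.out (p := p.Prime)
  induction k with
  | zero => simp
  | succ k ih =>
    have hk' : k ≤ p - 1 := by omega
    have ih' := ih hk'
    have hpascal : (p-1).choose k + (p-1).choose (k+1) = p.choose (k+1) := by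
      have h := Nat.choose_succ_succ (p-1) k
      simp only [Nat.succ_eq_add_one] at h
      rw [show p - 1 + 1 = p by omega] at h
      omega
    have hdvd : p ∣ p.choose (k+1) := hp.dvd_choose_self (by omega) (by omega)
    have h0 : ((p.choose (k+1) : ℕ) : ZMod p) = 0 :=
      (ZMod.natCast_eq_zero_iff _ _).mpr hdvd
    have := congrArg (Nat.cast : ℕ → ZMod p) hpascal
    push_cast at this
    rw [h0] at this
    have : (((p-1).choose (k+1) : ℕ) : ZMod p) = -(((p-1).choose k : ℕ) : ZMod p) := by
      linear_combination this
    rw [this, ih']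
    ring

lemma choose_pm2 (hp3 : 3 < p) (k : ℕ) (hk : k ≤ p - 2) :
    (((p-2).choose k : ℕ) : ZMod p) = (-1)^k * ((k:ZMod p)+1) := by
  have hp := Fact.out (p := p.Prime)
  induction k with
  | zero => simp
  | succ k ih =>
    have hk' : k ≤ p - 2 := by omega
    have ih' := ih hk'
    have hpascal : (p-2).choose k + (p-2).choose (k+1) = (p-1).choose (k+1) := by
      have h := Nat.choose_succ_succ (p-2) k
      simp only [Nat.succ_eq_add_one] at h
      rw [show p - 2 + 1 = p - 1 by omega] at h
      omega
    have h1 := choose_pm1 hp3 (k+1) (by omega)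
    have := congrArg (Nat.cast : ℕ → ZMod p) hpascal
    push_cast at this
    rw [h1] at this
    have h2 : (((p-2).choose (k+1) : ℕ) : ZMod p)
        = (-1)^(k+1) - (((p-2).choose k : ℕ) : ZMod p) := by
      linear_combination this
    rw [h2, ih']
    push_cast
    ring

lemma neg_one_sq_pow (k : ℕ) : (((-1 : ZMod p))^k)^2 = 1 := by
  rw [← pow_mul, mul_comm, pow_mul]
  norm_num

lemma S1 (hp3 : 3 < p) : ((bSeq (p-1) : ℕ) : ZMod p) = (-3)^(p/2) := by
  have hm2 : 2 ≤ p / 2 := by omega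
  have hcast : ((bSeq (p-1) : ℕ) : ZMod p)
      = ∑ k ∈ range p, (((p-1).choose k : ℕ) : ZMod p)^2 * (((2*k).choose k : ℕ) : ZMod p) := by
    unfold bSeq
    rw [show p-1+1 = p by omega]
    push_cast
    rfl
  rw [hcast]
  have hstep : ∀ k ∈ range p,
      (((p-1).choose k : ℕ) : ZMod p)^2 * (((2*k).choose k : ℕ) : ZMod p)
      = ((p/2).choose k : ZMod p) * (-4 : ZMod p)^k := by
    intro k hk
    rw [Finset.mem_range] at hk
    rw [choose_pm1 hp3 k (by omega), cb_eq hp3 k (by omega), neg_one_sq_pow]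
    ring
  rw [Finset.sum_congr rfl hstep]
  have hsub : range (p/2 + 1) ⊆ range p := by
    apply Finset.range_subset_range.mpr
    omega
  rw [← Finset.sum_subset hsub (fun k _ hk2 => by
    rw [Finset.mem_range, not_lt] at hk2
    rw [Nat.choose_eq_zero_of_lt (by omega)]
    push_cast
    ring)]
  rw [powsum (p/2) (-4 : ZMod p)]
  norm_num

lemma S2 (hp3 : 3 < p) : 3 * ((bSeq (p-2) : ℕ) : ZMod p) = (-3)^(p/2) := by
  have hm2 : 2 ≤ p / 2 := by omega
  obtain ⟨t, ht⟩ : ∃ t, p / 2 = t + 2 := ⟨p/2 - 2, by omega⟩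
  have hcast : ((bSeq (p-2) : ℕ) : ZMod p)
      = ∑ k ∈ range (p-1), (((p-2).choose k : ℕ) : ZMod p)^2 * (((2*k).choose k : ℕ) : ZMod p) := by
    unfold bSeq
    rw [show p-2+1 = p-1 by omega]
    push_cast
    rfl
  rw [hcast]
  have hstep : ∀ k ∈ range (p-1),
      (((p-2).choose k : ℕ) : ZMod p)^2 * (((2*k).choose k : ℕ) : ZMod p)
      = ((k:ZMod p)+1)^2 * (((p/2).choose k : ZMod p) * (-4 : ZMod p)^k) := by
    intro k hk
    rw [Finset.mem_range] at hk
    rw [choose_pm2 hp3 k (by omega), cb_eq hp3 k (by omega)]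
    rw [mul_pow, neg_one_sq_pow]
    ring
  rw [Finset.sum_congr rfl hstep]
  have hsub : range (p/2 + 1) ⊆ range (p-1) := by
    apply Finset.range_subset_range.mpr
    omega
  rw [← Finset.sum_subset hsub (fun k _ hk2 => by
    rw [Finset.mem_range, not_lt] at hk2
    rw [Nat.choose_eq_zero_of_lt (by omega)]
    push_cast
    ring)]
  -- now the weighted sum
  rw [ht]
  have hexp : ∀ k ∈ range (t+3),
      ((k:ZMod p)+1)^2 * (((t+2).choose k : ZMod p) * (-4 : ZMod p)^k)
      = (k : ZMod p) * ((k:ZMod p)-1) * ((t+2).choose k : ZMod p) * (-4:ZMod p)^k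
        + 3 * ((k : ZMod p) * ((t+1+1).choose k : ZMod p) * (-4:ZMod p)^k)
        + ((t+2).choose k : ZMod p) * (-4:ZMod p)^k := by
    intro k _
    ring
  rw [Finset.sum_congr rfl hexp]
  rw [Finset.sum_add_distrib, Finset.sum_add_distrib, ← Finset.mul_sum]
  rw [show t + 3 = (t+1)+2 from rfl]
  rw [sum1 (t+1) (-4 : ZMod p)]
  rw [show (t+1)+2 = t + 3 from rfl]
  rw [sum2 t (-4 : ZMod p), show t + 3 = (t+2)+1 from rfl, powsum (t+2) (-4 : ZMod p)]
  have hm := two_m_cast (p := p) hp3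
  rw [ht] at hm
  push_cast at hm
  have hc : (16 : ZMod p)*((t:ZMod p)+1)*((t:ZMod p)+2) + 36*((t:ZMod p)+2) + 9 = 3 := by
    linear_combination (8*((t:ZMod p)+2)+6) * hm
  have hx : (1 + (-4 : ZMod p)) = -3 := by norm_num
  rw [hx]
  push_cast
  calc 3 * (((t:ZMod p)+2)*((t:ZMod p)+1)*(-4)^2*(-3)^t
        + 3*(((t:ZMod p)+1+1)*(-4)*(-3)^(t+1))
        + (-3)^(t+2))
      = ((16 : ZMod p)*((t:ZMod p)+1)*((t:ZMod p)+2) + 36*((t:ZMod p)+2) + 9) * (3*(-3)^t) := by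
        rw [pow_succ, pow_succ, pow_succ]
        ring
    _ = 3 * (3*(-3)^t) := by rw [hc]
    _ = (-3)^(t+2) := by rw [pow_succ, pow_succ]; ring

end ModP

/-- For a prime `p > 3` and `0 ≤ n ≤ p-1`,
`b n ≡ (-3 | p) ⬝ 9^n ⬝ b (p-1-n) (mod p)`, with `(-3 | p)` the Legendre symbol. -/
theorem bSeq_symmetry (p : ℕ) [Fact p.Prime] (hp3 : 3 < p) :
    ∀ n : ℕ, n ≤ p - 1 →
      (bSeq n : ℤ) ≡ legendreSym p (-3) * 9 ^ n * (bSeq (p - 1 - n) : ℤ) [ZMOD p] := by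
  have hp := Fact.out (p := p.Prime)
  set χ : ZMod p := ((legendreSym p (-3) : ℤ) : ZMod p) with hχdef
  have hχ : χ = (-3 : ZMod p)^(p/2) := by
    rw [hχdef, legendreSym.eq_pow]
    push_cast
    ring
  have hne3 : ((-3 : ℤ) : ZMod p) ≠ 0 := by
    intro h
    have h3 : ((3 : ℕ) : ZMod p) = 0 := by push_cast at h ⊢; linear_combination -h
    rw [ZMod.natCast_eq_zero_iff] at h3
    have := Nat.le_of_dvd (by omega) h3
    omega
  have hχ2 : χ * χ = 1 := by
    have := legendreSym.sq_one (p := p) (a := -3) hne3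
    have hc := congrArg (Int.cast : ℤ → ZMod p) this
    push_cast at hc
    rw [hχdef]
    push_cast
    linear_combination hc
  have key : ∀ n : ℕ, n ≤ p - 1 →
      ((bSeq n : ℕ) : ZMod p) = χ * 9^n * ((bSeq (p - 1 - n) : ℕ) : ZMod p) := by
    intro n
    induction n using Nat.strong_induction_on with
    | _ n ih =>
      match n with
      | 0 =>
        intro _
        have hb0 : bSeq 0 = 1 := by simp [bSeq]
        rw [Nat.sub_zero, hb0, S1 hp3, ← hχ]
        push_cast
        linear_combination -hχ2
      | 1 =>
        intro _
        have hb1 : bSeq 1 = 3 := by decide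
        rw [hb1, show p - 1 - 1 = p - 2 by omega]
        have h2 := S2 (p := p) hp3
        rw [← hχ] at h2
        push_cast
        linear_combination (-3*χ)*h2 + (-3)*hχ2
      | (j+2) =>
        intro hn
        set M := p - 2 - j with hMdef
        have hM1 : 1 ≤ M := by omega
        have ih1 := ih (j+1) (by omega) (by omega)
        have ih0 := ih j (by omega) (by omega)
        rw [show p - 1 - (j+1) = M by omega] at ih1
        rw [show p - 1 - j = M + 1 by omega] at ih0
        rw [show p - 1 - (j+2) = M - 1 by omega]
        -- cast recurrences
        have rec1 := congrArg (Int.cast : ℤ → ZMod p) (bRec (j+1) (by omega))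
        rw [show j + 1 - 1 = j from rfl, show j + 1 + 1 = j + 2 from rfl] at rec1
        push_cast at rec1
        have rec2 := congrArg (Int.cast : ℤ → ZMod p) (bRec M hM1)
        push_cast at rec2
        have hμ : ((M : ℕ) : ZMod p) = -((j:ZMod p)+2) := by
          have hsum : M + (j + 2) = p := by omega
          have := congrArg (Nat.cast : ℕ → ZMod p) hsum
          push_cast at this
          rw [ZMod.natCast_self] at this
          linear_combination this
        rw [hμ] at rec2
        have hcancel : ((j:ZMod p)+2) ≠ 0 := by
          intro h
          have h2 : ((j+2 : ℕ) : ZMod p) = 0 := by push_cast; linear_combination h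
          rw [ZMod.natCast_eq_zero_iff] at h2
          have := Nat.le_of_dvd (by omega) h2
          omega
        have hkey : ((j:ZMod p)+2)^2 * ((bSeq (j+2) : ℕ) : ZMod p)
            = ((j:ZMod p)+2)^2 * (χ * 9^(j+2) * ((bSeq (M-1) : ℕ) : ZMod p)) := by
          have hp1 : (9 : ZMod p)^(j+1) = 9^j * 9 := by rw [pow_succ]
          have hp2 : (9 : ZMod p)^(j+2) = 9^j * 81 := by
            rw [pow_succ, pow_succ]; ring
          rw [hp1] at ih1
          rw [hp2]
          linear_combination rec1 + (10*((j:ZMod p)+1)^2+10*((j:ZMod p)+1)+3) * ih1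
            - 9*((j:ZMod p)+1)^2 * ih0 - 9*(9:ZMod p)^j*χ * rec2
        exact mul_left_cancel₀ (pow_ne_zero 2 hcancel) hkey
  intro n hn
  rw [← ZMod.intCast_eq_intCast_iff]
  push_cast
  rw [key n hn]
end

section
/- Let p be an odd prime and define c_n = ∑_{d | n, d ≡ 1 (mod 4)} d^2 - ∑_{d | n, d ≡ 3 (mod 4)} d^2. Then for all positive integers m and r ≥ 1, c_{m p^r} ≡ c_{m p^{r-1}} (mod p^r). -/
/-- `c n = ∑_{d ∣ n, d ≡ 1 (4)} d^2 - ∑_{d ∣ n, d ≡ 3 (4)} d^2`. -/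
def cSeq (n : ℕ) : ℤ :=
  ∑ d ∈ n.divisors.filter (fun d => d % 4 = 1), (d : ℤ) ^ 2
    - ∑ d ∈ n.divisors.filter (fun d => d % 4 = 3), (d : ℤ) ^ 2

/-- For an odd prime `p`, `m ≥ 1` and `r ≥ 1`,
`c (m p^r) ≡ c (m p^(r-1)) (mod p^r)`. -/
theorem cSeq_supercongruence (p : ℕ) (hp : p.Prime) (hodd : Odd p)
    (m r : ℕ) (hm : 0 < m) (hr : 1 ≤ r) :
    cSeq (m * p ^ r) ≡ cSeq (m * p ^ (r - 1)) [ZMOD (p : ℤ) ^ r] := by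
  have hp0 : p ≠ 0 := hp.pos.ne'
  have hN : m * p ^ r ≠ 0 := by positivity
  set w : ℕ → ℤ := fun d =>
    (if d % 4 = 1 then (d : ℤ) ^ 2 else 0) - (if d % 4 = 3 then (d : ℤ) ^ 2 else 0) with hw
  have hc : ∀ n : ℕ, cSeq n = ∑ d ∈ n.divisors, w d := by
    intro n
    rw [cSeq, Finset.sum_filter, Finset.sum_filter, ← Finset.sum_sub_distrib]
  set A := (m * p ^ r).divisors with hA
  set B := (m * p ^ (r - 1)).divisors with hB
  have hBA : B ⊆ A :=
    Nat.divisors_subset_of_dvd hN (mul_dvd_mul_left m (pow_dvd_pow p (Nat.sub_le r 1)))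
  have key : ∀ d ∈ A \ B, (p : ℤ) ^ r ∣ w d := by
    intro d hd
    obtain ⟨hdA, hdB⟩ := Finset.mem_sdiff.mp hd
    obtain ⟨hdvd, -⟩ := Nat.mem_divisors.mp hdA
    have hd0 : d ≠ 0 := by
      rintro rfl
      exact hN (Nat.eq_zero_of_zero_dvd hdvd)
    have hpr : p ^ r ∣ d := by
      by_contra h
      apply hdB
      rw [hB, Nat.mem_divisors]
      refine ⟨?_, by positivity⟩
      set v := d.factorization p with hv
      have hvr : v < r := by
        by_contra hvr
        exact h ((pow_dvd_pow p (le_of_not_gt hvr)).trans (Nat.ordProj_dvd d p))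
      set e := d / p ^ v with he
      have hde : p ^ v * e = d := Nat.ordProj_mul_ordCompl_eq_self d p
      have hpe : ¬ p ∣ e := Nat.not_dvd_ordCompl hp hd0
      have hcop : Nat.Coprime e (p ^ r) :=
        ((hp.coprime_iff_not_dvd.mpr hpe).symm).pow_right r
      have hed : e ∣ d := ⟨p ^ v, by rw [← hde]; ring⟩
      have hem : e ∣ m := hcop.dvd_of_dvd_mul_right (hed.trans hdvd)
      have : p ^ v * e ∣ p ^ (r - 1) * m :=
        mul_dvd_mul (pow_dvd_pow p (Nat.le_sub_one_of_lt hvr)) hem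
      rw [hde] at this
      rwa [mul_comm] at this
    have hdi : (p : ℤ) ^ r ∣ (d : ℤ) ^ 2 := by
      have : ((p : ℤ)) ^ r ∣ (d : ℤ) := by exact_mod_cast Int.natCast_dvd_natCast.mpr hpr
      exact this.trans (dvd_pow_self _ two_ne_zero)
    simp only [hw]
    split_ifs <;> simp [hdi, dvd_sub, hdi]
  have hsum : cSeq (m * p ^ r) - cSeq (m * p ^ (r - 1)) = ∑ d ∈ A \ B, w d := by
    rw [hc, hc, ← Finset.sum_sdiff hBA]
    ring
  have hdvd : (p : ℤ) ^ r ∣ cSeq (m * p ^ r) - cSeq (m * p ^ (r - 1)) := by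
    rw [hsum]; exact Finset.dvd_sum key
  exact (Int.modEq_iff_dvd.mpr hdvd).symm
end

section
/- Let p be a prime and n, m nonnegative integers with m ≤ n. Then the p-adic valuation of the binomial coefficient C(n, m) equals the number of carries when adding m and n - m in base p. -/
/-- Kummer's theorem: for a prime `p` and `m ≤ n`, the `p`-adic valuation of
`C(n, m)` equals the number of carries when adding `m` and `n - m` in base `p`
(there is a carry out of position `j` iff `m % p^(j+1) + (n-m) % p^(j+1) ≥ p^(j+1)`). -/
theorem kummer_carries (p : ℕ) (hp : p.Prime) (n m : ℕ) (h : m ≤ n) :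
    padicValNat p (n.choose m) =
      ((Finset.range (n + 1)).filter
        (fun j => p ^ (j + 1) ≤ m % p ^ (j + 1) + (n - m) % p ^ (j + 1))).card := by
  haveI : Fact p.Prime := ⟨hp⟩
  rw [padicValNat_choose (b := n + 2) h
    (lt_of_le_of_lt (Nat.log_le_self p n) (by omega))]
  apply Finset.card_bij (fun i _ => i - 1)
  · intro i hi
    simp only [Finset.mem_filter, Finset.mem_Ico, Finset.mem_range] at hi ⊢
    obtain ⟨⟨h1, h2⟩, h3⟩ := hi
    constructor
    · omega
    · have : i - 1 + 1 = i := by omega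
      rw [this]; exact h3
  · intro i hi j hj hij
    simp only [Finset.mem_filter, Finset.mem_Ico] at hi hj
    omega
  · intro j hj
    simp only [Finset.mem_filter, Finset.mem_range, Finset.mem_Ico] at hj ⊢
    exact ⟨j + 1, ⟨⟨by omega, by omega⟩, hj.2⟩, by omega⟩
end

section
/- Let p be an odd prime, and let i, n be positive integers with p not dividing i and 2i ≤ n. Then v_p( C(2(n-i), n-i)^2 · C(n-i, i) ) ≥ v_p(n), where v_p denotes the p-adic valuation. -/
open Nat Finset

lemma carry_lemma (i m P : ℕ) (him : i ≤ m) (h : P ≤ i % P + m % P) :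
    P ≤ i % P + (m - i) % P ∨ P ≤ m % P + m % P := by
  by_contra hc
  push_neg at hc
  obtain ⟨h2, h3⟩ := hc
  have hmP : m % P = i % P + (m - i) % P := by
    conv_lhs => rw [show m = i + (m - i) from (Nat.add_sub_cancel' him).symm]
    rw [Nat.add_mod, Nat.mod_eq_of_lt h2]
  rw [hmP] at h h3
  omega

/-- For an odd prime `p` and positive integers `i`, `n` with `p ∤ i` and `2i ≤ n`,
`v_p(C(2(n-i), n-i)^2 ⬝ C(n-i, i)) ≥ v_p(n)`. -/
theorem valuation_g_ge (p : ℕ) (hp : p.Prime) (hodd : Odd p)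
    (i n : ℕ) (hi : 0 < i) (hn : 0 < n) (hpi : ¬ p ∣ i) (h2i : 2 * i ≤ n) :
    padicValNat p n ≤
      padicValNat p (((2 * (n - i)).choose (n - i)) ^ 2 * ((n - i).choose i)) := by
  haveI : Fact p.Prime := ⟨hp⟩
  have him : i ≤ n - i := by omega
  have hin : i ≤ n := by omega
  have hm2 : n - i ≤ 2 * (n - i) := by omega
  have hcm : 0 < (2 * (n - i)).choose (n - i) := Nat.choose_pos hm2
  have hci : 0 < (n - i).choose i := Nat.choose_pos him
  have hprod : 0 < ((2 * (n - i)).choose (n - i)) ^ 2 * ((n - i).choose i) :=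
    Nat.mul_pos (pow_pos hcm 2) hci
  have hbn : Nat.log p n < Nat.log p (2 * n) + 1 :=
    lt_of_le_of_lt (Nat.log_mono_right (by omega)) (lt_add_one _)
  have hbm : Nat.log p (2 * (n - i)) < Nat.log p (2 * n) + 1 :=
    lt_of_le_of_lt (Nat.log_mono_right (by omega)) (lt_add_one _)
  have hbm' : Nat.log p (n - i) < Nat.log p (2 * n) + 1 :=
    lt_of_le_of_lt (Nat.log_mono_right (by omega)) (lt_add_one _)
  have e1 := Nat.Prime.emultiplicity_choose hp hin hbn
  have e2 := Nat.Prime.emultiplicity_choose hp him hbm'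
  have e3 := Nat.Prime.emultiplicity_choose hp hm2 hbm
  rw [show 2 * (n - i) - (n - i) = n - i by omega] at e3
  set b := Nat.log p (2 * n) + 1 with hb
  have hsub : {j ∈ Ico 1 b | p ^ j ≤ i % p ^ j + (n - i) % p ^ j} ⊆
      {j ∈ Ico 1 b | p ^ j ≤ i % p ^ j + (n - i - i) % p ^ j} ∪
      {j ∈ Ico 1 b | p ^ j ≤ (n - i) % p ^ j + (n - i) % p ^ j} := by
    intro j hj
    simp only [Finset.mem_filter, Finset.mem_union] at hj ⊢
    rcases carry_lemma i (n - i) (p ^ j) him hj.2 with h | h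
    · exact Or.inl ⟨hj.1, h⟩
    · exact Or.inr ⟨hj.1, h⟩
  have hcard := (Finset.card_le_card hsub).trans (Finset.card_union_le _ _)
  -- emultiplicity chain
  have hzi : emultiplicity p i = 0 :=
    emultiplicity_eq_zero.2 fun h => hpi (h.trans dvd_rfl)
  have hstep1 : emultiplicity p n ≤ emultiplicity p (n.choose i) := by
    have h := Nat.Prime.emultiplicity_le_emultiplicity_choose_add hp n i
    rwa [hzi, add_zero] at h
  have hstep2 : emultiplicity p (n.choose i) ≤
      emultiplicity p ((n - i).choose i) + emultiplicity p ((2 * (n - i)).choose (n - i)) := by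
    rw [e1, e2, e3, ← Nat.cast_add]
    exact_mod_cast hcard
  have hstep3 : emultiplicity p ((n - i).choose i) + emultiplicity p ((2 * (n - i)).choose (n - i)) ≤
      emultiplicity p (((2 * (n - i)).choose (n - i)) ^ 2 * ((n - i).choose i)) := by
    rw [emultiplicity_mul hp.prime, pow_two, emultiplicity_mul hp.prime, add_comm]
    exact add_le_add le_self_add le_rfl
  have hfinal : emultiplicity p n ≤
      emultiplicity p (((2 * (n - i)).choose (n - i)) ^ 2 * ((n - i).choose i)) :=
    hstep1.trans (hstep2.trans hstep3)
  rw [← padicValNat_eq_emultiplicity hn.ne', ← padicValNat_eq_emultiplicity hprod.ne'] at hfinal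
  exact_mod_cast hfinal
end

section
/- Let p be an odd prime, q ≥ 1, and m, k, r, s integers with r ≥ s ≥ q and kp^s ≤ mp^r. Let e_0 = v_p(C(m p^r, k p^s)). Then C(m p^r, k p^s)/p^{e_0} ≡ C(m p^{r-1}, k p^{s-1})/p^{e_0} (mod p^q), and in particular both binomial coefficients have the same p-adic valuation e_0. -/
open Nat

private def ppF (p n : ℕ) : ℕ := ∏ i ∈ Finset.range n, (if p ∣ (i + 1) then 1 else (i + 1))

private lemma ppF_pos (p n : ℕ) : 0 < ppF p n := by
  apply Finset.prod_pos
  intro i _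
  split <;> omega

private lemma ppF_coprime {p : ℕ} (hp : p.Prime) (n : ℕ) : Nat.Coprime p (ppF p n) := by
  apply Nat.Coprime.prod_right
  intro i _
  split
  · exact Nat.coprime_one_right p
  · exact hp.coprime_iff_not_dvd.mpr (by assumption)

private lemma fact_eq {p : ℕ} (hp : 2 ≤ p) : ∀ n : ℕ,
    n ! = ppF p n * p ^ (n / p) * (n / p)! := by
  intro n
  induction n with
  | zero => simp [ppF]
  | succ n ih =>
    have hsucc : ppF p (n + 1) = ppF p n * (if p ∣ (n + 1) then 1 else (n + 1)) :=
      Finset.prod_range_succ _ n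
    rw [Nat.factorial_succ, ih, hsucc]
    by_cases h : p ∣ (n + 1)
    · obtain ⟨t, ht⟩ := h
      have ht1 : 1 ≤ t := by
        rcases Nat.eq_zero_or_pos t with h0 | h0
        · simp [h0] at ht
        · exact h0
      obtain ⟨t', rfl⟩ : ∃ t', t = t' + 1 := ⟨t - 1, by omega⟩
      have hn : n = p * t' + (p - 1) := by rw [Nat.mul_succ] at ht; omega
      have hd1 : n / p = t' := by
        rw [hn, Nat.mul_add_div (by omega), Nat.div_eq_of_lt (by omega)]; omega
      have hd2 : (n + 1) / p = t' + 1 := by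
        rw [ht, Nat.mul_div_cancel_left _ (by omega)]
      rw [hd1, hd2, if_pos ⟨t' + 1, ht⟩, ht, Nat.factorial_succ, pow_succ]
      ring
    · rw [Nat.succ_div_of_not_dvd h, if_neg h]
      ring

private lemma ppF_add {p : ℕ} (s A K : ℕ) (hs : 1 ≤ s) (hA : p ^ s ∣ A) :
    ppF p (A + K) ≡ ppF p A * ppF p K [MOD p ^ s] := by
  have hpA : p ∣ A := dvd_trans (dvd_pow_self p (by omega)) hA
  have hsplit : ppF p (A + K)
      = ppF p A * ∏ i ∈ Finset.range K, (if p ∣ (A + i + 1) then 1 else (A + i + 1)) := by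
    unfold ppF
    rw [Finset.prod_range_add]
  rw [hsplit]
  have key : (∏ i ∈ Finset.range K, (if p ∣ (A + i + 1) then 1 else (A + i + 1)))
      ≡ ppF p K [MOD p ^ s] := by
    rw [← ZMod.natCast_eq_natCast_iff, ppF, Nat.cast_prod, Nat.cast_prod]
    apply Finset.prod_congr rfl
    intro i _
    have hiff : p ∣ (A + i + 1) ↔ p ∣ (i + 1) := by
      rw [add_assoc]; exact Nat.dvd_add_right hpA
    have hAz : ((A : ZMod (p ^ s)) = 0) := (ZMod.natCast_eq_zero_iff A _).mpr hA
    by_cases h : p ∣ (i + 1)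
    · rw [if_pos (hiff.mpr h), if_pos h]
    · rw [if_neg (fun hc => h (hiff.mp hc)), if_neg h]
      push_cast
      rw [hAz, zero_add]
  exact key.mul_left (ppF p A)

/-- Ljunggren/Jacobsthal-type congruence: for an odd prime `p`, `q ≥ 1`,
`r ≥ s ≥ q` and `k p^s ≤ m p^r`, with `e₀ = v_p(C(m p^r, k p^s))`, we have
`C(m p^r, k p^s)/p^(e₀) ≡ C(m p^(r-1), k p^(s-1))/p^(e₀) (mod p^q)`,
and in particular both binomial coefficients have the same `p`-adic valuation. -/
theorem granville_congruence (p : ℕ) (hp : p.Prime) (hodd : Odd p)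
    (q m k r s : ℕ) (hq : 1 ≤ q) (hsq : q ≤ s) (hrs : s ≤ r)
    (hle : k * p ^ s ≤ m * p ^ r) :
    padicValNat p ((m * p ^ (r - 1)).choose (k * p ^ (s - 1))) =
        padicValNat p ((m * p ^ r).choose (k * p ^ s)) ∧
      (m * p ^ r).choose (k * p ^ s) / p ^ padicValNat p ((m * p ^ r).choose (k * p ^ s))
        ≡ (m * p ^ (r - 1)).choose (k * p ^ (s - 1))
            / p ^ padicValNat p ((m * p ^ r).choose (k * p ^ s)) [MOD p ^ q] := by
  haveI : Fact p.Prime := ⟨hp⟩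
  have hp2 : 2 ≤ p := hp.two_le
  set N' : ℕ := m * p ^ (r - 1) with hN'
  set K' : ℕ := k * p ^ (s - 1) with hK'
  set N : ℕ := m * p ^ r with hN
  set K : ℕ := k * p ^ s with hK
  have hNe : N = N' * p := by
    rw [hN, hN', mul_assoc, ← pow_succ]
    congr 2
    omega
  have hKe : K = K' * p := by
    rw [hK, hK', mul_assoc, ← pow_succ]
    congr 2
    omega
  have hKN : K ≤ N := hle
  have hK'N' : K' ≤ N' := by
    have := hKN
    rw [hNe, hKe] at this
    exact Nat.le_of_mul_le_mul_right this (by omega)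
  set c1 : ℕ := N.choose K with hc1def
  set c2 : ℕ := N'.choose K' with hc2def
  -- factorial decompositions
  have hdN : N / p = N' := by rw [hNe, Nat.mul_div_cancel _ (by omega)]
  have hdK : K / p = K' := by rw [hKe, Nat.mul_div_cancel _ (by omega)]
  have hdNK : (N - K) / p = N' - K' := by
    rw [hNe, hKe, ← Nat.sub_mul, Nat.mul_div_cancel _ (by omega)]
  have hfN : N ! = ppF p N * p ^ N' * N' ! := by rw [fact_eq hp2 N, hdN]
  have hfK : K ! = ppF p K * p ^ K' * K' ! := by rw [fact_eq hp2 K, hdK]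
  have hfNK : (N - K)! = ppF p (N - K) * p ^ (N' - K') * (N' - K')! := by
    rw [fact_eq hp2 (N - K), hdNK]
  have h1 : c1 * K ! * (N - K)! = N ! := Nat.choose_mul_factorial_mul_factorial hKN
  have h2 : c2 * K' ! * (N' - K')! = N' ! := Nat.choose_mul_factorial_mul_factorial hK'N'
  have hexp : p ^ N' = p ^ K' * p ^ (N' - K') := by
    rw [← pow_add]
    congr 1
    omega
  -- key identity
  have hkey : c1 * (ppF p K * ppF p (N - K)) = c2 * ppF p N := by
    apply Nat.eq_of_mul_eq_mul_right
      (show 0 < p ^ N' * (K' ! * (N' - K')!) by positivity)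
    calc c1 * (ppF p K * ppF p (N - K)) * (p ^ N' * (K' ! * (N' - K')!))
        = c1 * (ppF p K * p ^ K' * K' !) * (ppF p (N - K) * p ^ (N' - K') * (N' - K')!) := by
          rw [hexp]; ring
      _ = c1 * K ! * (N - K)! := by rw [hfK, hfNK]
      _ = N ! := h1
      _ = ppF p N * p ^ N' * N' ! := hfN
      _ = ppF p N * p ^ N' * (c2 * K' ! * (N' - K')!) := by rw [h2]
      _ = c2 * ppF p N * (p ^ N' * (K' ! * (N' - K')!)) := by ring
  have hc1 : c1 ≠ 0 := (Nat.choose_pos hKN).ne'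
  have hc2 : c2 ≠ 0 := (Nat.choose_pos hK'N').ne'
  have hvP : padicValNat p (ppF p K * ppF p (N - K)) = 0 :=
    padicValNat.eq_zero_of_not_dvd
      (Nat.Prime.not_dvd_mul hp
        (Nat.Prime.coprime_iff_not_dvd hp |>.mp (ppF_coprime hp K))
        (Nat.Prime.coprime_iff_not_dvd hp |>.mp (ppF_coprime hp (N - K))))
  have hvQ : padicValNat p (ppF p N) = 0 :=
    padicValNat.eq_zero_of_not_dvd
      (Nat.Prime.coprime_iff_not_dvd hp |>.mp (ppF_coprime hp N))
  have hval : padicValNat p c2 = padicValNat p c1 := by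
    have h := congrArg (padicValNat p) hkey
    rw [padicValNat.mul hc1 (Nat.mul_pos (ppF_pos p K) (ppF_pos p (N - K))).ne',
      padicValNat.mul hc2 (ppF_pos p N).ne', hvP, hvQ] at h
    omega
  refine ⟨hval, ?_⟩
  set e : ℕ := padicValNat p c1 with he
  set u : ℕ := c1 / p ^ e with hu
  set v : ℕ := c2 / p ^ e with hv
  have hdu : p ^ e ∣ c1 := pow_padicValNat_dvd
  have hdv : p ^ e ∣ c2 := by
    rw [show e = padicValNat p c2 from hval.symm]
    exact pow_padicValNat_dvd
  have hpu : u * p ^ e = c1 := Nat.div_mul_cancel hdu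
  have hpv : v * p ^ e = c2 := Nat.div_mul_cancel hdv
  have h3 : u * (ppF p K * ppF p (N - K)) = v * ppF p N := by
    apply Nat.eq_of_mul_eq_mul_right (pow_pos (by omega : 0 < p) e)
    calc u * (ppF p K * ppF p (N - K)) * p ^ e
        = u * p ^ e * (ppF p K * ppF p (N - K)) := by ring
      _ = c1 * (ppF p K * ppF p (N - K)) := by rw [hpu]
      _ = c2 * ppF p N := hkey
      _ = v * p ^ e * ppF p N := by rw [hpv]
      _ = v * ppF p N * p ^ e := by ring
  -- congruence ppF p N ≡ ppF p (N-K) * ppF p K mod p^s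
  have hdvdNK : p ^ s ∣ N - K := by
    apply Nat.dvd_sub
    · rw [hN]
      exact Dvd.dvd.mul_left (pow_dvd_pow p hrs) m
    · rw [hK]
      exact Dvd.dvd.mul_left dvd_rfl k
  have hNsplit : (N - K) + K = N := by omega
  have hcong : ppF p N ≡ ppF p K * ppF p (N - K) [MOD p ^ q] := by
    have h := ppF_add s (N - K) K (by omega) hdvdNK
    rw [hNsplit] at h
    have h' := Nat.ModEq.of_dvd (pow_dvd_pow p hsq) h
    calc ppF p N ≡ ppF p (N - K) * ppF p K [MOD p ^ q] := h'
      _ = ppF p K * ppF p (N - K) := mul_comm _ _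
  have hfin : u * (ppF p K * ppF p (N - K)) ≡ v * (ppF p K * ppF p (N - K)) [MOD p ^ q] := by
    rw [h3]
    exact hcong.mul_left v
  have hcop : Nat.gcd (p ^ q) (ppF p K * ppF p (N - K)) = 1 := by
    have : Nat.Coprime p (ppF p K * ppF p (N - K)) :=
      (ppF_coprime hp K).mul_right (ppF_coprime hp (N - K))
    exact (this.pow_left q)
  exact Nat.ModEq.cancel_right_of_coprime hcop hfin
end
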